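/- arXiv:2403.16670 — 3 statements merged into one kernel-verified Lean document; each statement's English description precedes it below -/
import Mathlib

section
/- For all nonnegative integers m and n, the probabilistic bivariate r-Bell polynomials satisfy the recurrence φ_{m+n,r}^Y(x,y) = Σ_{i=0}^{n} Σ_{k=0}^{m} (1/k!) · C(n,i) · (x)_k · y^k · φ_i^Y(x−k, y) · Σ_{j=k}^{m} C(m,j) · Σ_{l_1+⋯+l_k=j, l_i≥1} (j!/(l_1!⋯l_k!)) · E[(S_k + r)^{n−i} · ∏_{i'=1}^{k} Y_{i'}^{l_{i'}}] · r^{m−j}, where the innermost sum is over all k-tuples (l_1,…,l_k) of positive integers with l_1+⋯+l_k = j. -/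
open MeasureTheory ProbabilityTheory Finset

noncomputable section

variable {Ω : Type*} [MeasureSpace Ω]

/-- The falling factorial `(x)_k = x (x-1) ⋯ (x-k+1)`. -/
def fallFac (x : ℝ) (k : ℕ) : ℝ := ∏ i ∈ Finset.range k, (x - (i : ℝ))

/-- Partial sums `S_k = Y_1 + ⋯ + Y_k` (with `S_0 = 0`). -/
def S (Y : ℕ → Ω → ℝ) (k : ℕ) (ω : Ω) : ℝ := ∑ i ∈ Finset.range k, Y i ω

/-- The probabilistic Stirling numbers of the second kind associated with `Y`:
`{n brace k}_Y = (1/k!) ∑_{i=0}^{k} C(k,i) (−1)^{k−i} E[S_i^n]`. -/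
def probStirling (Y : ℕ → Ω → ℝ) (n k : ℕ) : ℝ :=
  ((k.factorial : ℝ))⁻¹ *
    ∑ i ∈ Finset.range (k + 1), (k.choose i : ℝ) * (-1) ^ (k - i) * ∫ ω, (S Y i ω) ^ n

/-- The probabilistic r-Stirling numbers of the second kind associated with `Y`:
`{n+r brace k+r}_{r,Y} = (1/k!) ∑_{j=0}^{k} C(k,j) (−1)^{k−j} E[(S_j + r)^n]`. -/
def probRStirling (Y : ℕ → Ω → ℝ) (r n k : ℕ) : ℝ :=
  ((k.factorial : ℝ))⁻¹ *
    ∑ j ∈ Finset.range (k + 1), (k.choose j : ℝ) * (-1) ^ (k - j) *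
      ∫ ω, (S Y j ω + (r : ℝ)) ^ n

/-- The probabilistic bivariate Bell polynomials associated with `Y`. -/
def phiBiv (Y : ℕ → Ω → ℝ) (n : ℕ) (x y : ℝ) : ℝ :=
  ∑ k ∈ Finset.range (n + 1), probStirling Y n k * fallFac x k * y ^ k

/-- The probabilistic bivariate r-Bell polynomials associated with `Y`. -/
def phiRBiv (Y : ℕ → Ω → ℝ) (r n : ℕ) (x y : ℝ) : ℝ :=
  ∑ k ∈ Finset.range (n + 1), probRStirling Y r n k * fallFac x k * y ^ k

/-- k-tuples of positive integers summing to `j`. -/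
def posTuples (k j : ℕ) : Finset (Fin k → ℕ) :=
  (Finset.Nat.antidiagonalTuple k j).filter fun l => ∀ i, 0 < l i


set_option linter.unusedSectionVars false
set_option maxHeartbeats 1000000

section AlgebraLemmas


lemma neg_one_pow_sub_real {t k : ℕ} (h : t ≤ k) : ((-1:ℝ))^(k-t) = (-1)^k * (-1)^t := by
  obtain ⟨d, rfl⟩ := Nat.exists_eq_add_of_le h
  rw [Nat.add_sub_cancel_left, pow_add, mul_right_comm, ← mul_pow]
  norm_num

lemma alt_sum_choose_real (n : ℕ) :
    ∑ i ∈ Finset.range (n+1), (-1:ℝ)^i * (n.choose i : ℝ) = if n = 0 then 1 else 0 := by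
  have h := Int.alternating_sum_range_choose (n := n)
  calc (∑ i ∈ Finset.range (n+1), (-1:ℝ)^i * (n.choose i : ℝ))
      = ((∑ m ∈ Finset.range (n+1), (-1:ℤ)^m * (n.choose m : ℤ) : ℤ) : ℝ) := by
        push_cast; rfl
    _ = _ := by rw [h]; split <;> norm_num

lemma alt_sum_choose_mul (a t : ℕ) (ht : t ≤ a) :
    ∑ k ∈ Finset.Icc t a, (-1:ℝ)^(k-t) * (a.choose k : ℝ) * (k.choose t : ℝ)
      = if a = t then 1 else 0 := by
  have hcongr : ∀ k ∈ Finset.Icc t a, (-1:ℝ)^(k-t) * (a.choose k : ℝ) * (k.choose t : ℝ)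
      = (a.choose t : ℝ) * ((-1)^(k-t) * (((a-t).choose (k-t) : ℕ) : ℝ)) := by
    intro k hk
    rw [Finset.mem_Icc] at hk
    have h1 := Nat.choose_mul (n := a) hk.1
    have h2 : (a.choose k : ℝ) * (k.choose t : ℝ)
        = (a.choose t : ℝ) * (((a-t).choose (k-t) : ℕ) : ℝ) := by exact_mod_cast congrArg (Nat.cast : ℕ → ℝ) h1
    calc (-1:ℝ)^(k-t) * (a.choose k : ℝ) * (k.choose t : ℝ)
        = (-1:ℝ)^(k-t) * ((a.choose k : ℝ) * (k.choose t : ℝ)) := by ring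
      _ = (a.choose t : ℝ) * ((-1)^(k-t) * (((a-t).choose (k-t) : ℕ) : ℝ)) := by rw [h2]; ring
  rw [Finset.sum_congr rfl hcongr, ← Finset.mul_sum]
  have hre : ∑ k ∈ Finset.Icc t a, ((-1:ℝ)^(k-t) * (((a-t).choose (k-t) : ℕ) : ℝ))
      = ∑ u ∈ Finset.range (a - t + 1), (-1:ℝ)^u * (((a-t).choose u : ℕ) : ℝ) := by
    rw [← Finset.Ico_add_one_right_eq_Icc, Finset.sum_Ico_eq_sum_range]
    have : a + 1 - t = a - t + 1 := by omega
    rw [this]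
    refine Finset.sum_congr rfl fun u _ => ?_
    rw [Nat.add_sub_cancel_left]
  rw [hre, alt_sum_choose_real]
  rcases eq_or_ne a t with rfl | hne
  · simp
  · have : a - t ≠ 0 := by omega
    simp [this, hne]

/-- The purely combinatorial collapse identity. -/
lemma fin_collapse (G : ℕ → ℕ → ℝ) (K : ℕ) :
    ∑ k ∈ Finset.range (K+1), (K.choose k : ℝ) *
      ∑ s ∈ Finset.range (K-k+1), ∑ t ∈ Finset.range (k+1),
        ((K-k).choose s : ℝ) * (k.choose t : ℝ) * ((-1)^(K-k-s) * (-1)^(k-t)) * G (k+s) t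
    = ∑ q ∈ Finset.range (K+1), (K.choose q : ℝ) * (-1)^(K-q) * G q q := by
  -- step 1: reindex s ↦ a = k + s
  have step1 : ∀ k ∈ Finset.range (K+1),
      (K.choose k : ℝ) * ∑ s ∈ Finset.range (K-k+1), ∑ t ∈ Finset.range (k+1),
        ((K-k).choose s : ℝ) * (k.choose t : ℝ) * ((-1)^(K-k-s) * (-1)^(k-t)) * G (k+s) t
      = ∑ a ∈ Finset.Icc k K, ∑ t ∈ Finset.range (k+1),
        (K.choose k : ℝ) * ((K-k).choose (a-k) : ℝ) * (k.choose t : ℝ)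
          * ((-1)^(K-a) * (-1)^(k-t)) * G a t := by
    intro k hk
    rw [Finset.mem_range] at hk
    have hkK : k ≤ K := by omega
    rw [Finset.mul_sum]
    rw [← Finset.Ico_add_one_right_eq_Icc, Finset.sum_Ico_eq_sum_range]
    have h1 : K + 1 - k = K - k + 1 := by omega
    rw [h1]
    refine Finset.sum_congr rfl fun s hs => ?_
    rw [Finset.mem_range] at hs
    rw [Finset.mul_sum]
    refine Finset.sum_congr rfl fun t _ => ?_
    have h2 : k + s - k = s := by omega
    have h3 : K - (k + s) = K - k - s := by omega
    rw [h2, h3]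
    ring
  rw [Finset.sum_congr rfl step1]
  -- step 2: turn into a sum over sigma triples and regroup: k ranges in Icc t a
  -- We show the triple sum equals ∑ a ∈ range (K+1), ∑ t ∈ range (a+1),
  --   (∑ k ∈ Icc t a, ...) with same term.
  have step2 :
      ∑ k ∈ Finset.range (K+1), ∑ a ∈ Finset.Icc k K, ∑ t ∈ Finset.range (k+1),
        (K.choose k : ℝ) * ((K-k).choose (a-k) : ℝ) * (k.choose t : ℝ)
          * ((-1)^(K-a) * (-1)^(k-t)) * G a t
      = ∑ a ∈ Finset.range (K+1), ∑ t ∈ Finset.range (a+1), ∑ k ∈ Finset.Icc t a,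
        (K.choose k : ℝ) * ((K-k).choose (a-k) : ℝ) * (k.choose t : ℝ)
          * ((-1)^(K-a) * (-1)^(k-t)) * G a t := by
    rw [Finset.sum_sigma', Finset.sum_sigma', Finset.sum_sigma', Finset.sum_sigma']
    refine Finset.sum_nbij' (fun x => ⟨⟨x.1.2, x.2⟩, x.1.1⟩) (fun x => ⟨⟨x.2, x.1.1⟩, x.1.2⟩)
      ?_ ?_ ?_ ?_ ?_
    · rintro ⟨⟨k, a⟩, t⟩ h
      simp only [Finset.mem_sigma, Finset.mem_range, Finset.mem_Icc] at h ⊢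
      omega
    · rintro ⟨⟨a, t⟩, k⟩ h
      simp only [Finset.mem_sigma, Finset.mem_range, Finset.mem_Icc] at h ⊢
      omega
    · rintro ⟨⟨k, a⟩, t⟩ _; rfl
    · rintro ⟨⟨a, t⟩, k⟩ _; rfl
    · rintro ⟨⟨k, a⟩, t⟩ _; rfl
  rw [step2]
  -- step 3: inner k-sum collapses
  refine Finset.sum_congr rfl fun a ha => ?_
  rw [Finset.mem_range] at ha
  have haK : a ≤ K := by omega
  have step3 : ∀ t ∈ Finset.range (a+1),
      ∑ k ∈ Finset.Icc t a,
        (K.choose k : ℝ) * ((K-k).choose (a-k) : ℝ) * (k.choose t : ℝ)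
          * ((-1)^(K-a) * (-1)^(k-t)) * G a t
      = (K.choose a : ℝ) * (-1)^(K-a) * G a t * (if a = t then 1 else 0) := by
    intro t htmem
    rw [Finset.mem_range] at htmem
    have ht : t ≤ a := by omega
    have hterm : ∀ k ∈ Finset.Icc t a,
        (K.choose k : ℝ) * ((K-k).choose (a-k) : ℝ) * (k.choose t : ℝ)
          * ((-1)^(K-a) * (-1)^(k-t)) * G a t
        = (K.choose a : ℝ) * (-1)^(K-a) * G a t
            * ((-1:ℝ)^(k-t) * (a.choose k : ℝ) * (k.choose t : ℝ)) := by
      intro k hk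
      rw [Finset.mem_Icc] at hk
      have h1 := Nat.choose_mul (n := K) hk.2   -- K.choose a * a.choose k = K.choose k * (K-k).choose (a-k)
      have h2 : (K.choose k : ℝ) * ((K-k).choose (a-k) : ℝ)
          = (K.choose a : ℝ) * (a.choose k : ℝ) := by exact_mod_cast (congrArg (Nat.cast : ℕ → ℝ) h1).symm
      calc (K.choose k : ℝ) * ((K-k).choose (a-k) : ℝ) * (k.choose t : ℝ)
            * ((-1)^(K-a) * (-1)^(k-t)) * G a t
          = ((K.choose k : ℝ) * ((K-k).choose (a-k) : ℝ)) * ((k.choose t : ℝ)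
            * ((-1)^(K-a) * (-1)^(k-t)) * G a t) := by ring
        _ = _ := by rw [h2]; ring
    rw [Finset.sum_congr rfl hterm, ← Finset.mul_sum, alt_sum_choose_mul a t ht]
  rw [Finset.sum_congr rfl step3]
  rw [Finset.sum_eq_single a]
  · simp
  · intro t _ hne
    rw [if_neg (fun h => hne h.symm), mul_zero]
  · intro h; exact absurd (Finset.self_mem_range_succ a) h



lemma fallFac_add (x : ℝ) (k p : ℕ) : fallFac x (k+p) = fallFac x k * fallFac (x - (k:ℝ)) p := by
  unfold fallFac
  rw [Finset.prod_range_add]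
  congr 1
  refine Finset.prod_congr rfl fun i _ => ?_
  push_cast
  ring

lemma inv_factorial_mul (k K : ℕ) (h : k ≤ K) :
    ((k.factorial : ℝ))⁻¹ * (((K-k).factorial : ℝ))⁻¹
      = ((K.factorial : ℝ))⁻¹ * (K.choose k : ℝ) := by
  have h1 : (K.choose k : ℝ) * (k.factorial : ℝ) * ((K-k).factorial : ℝ) = (K.factorial : ℝ) := by
    exact_mod_cast congrArg (Nat.cast : ℕ → ℝ) (Nat.choose_mul_factorial_mul_factorial h)
  have h2 : (k.factorial : ℝ) ≠ 0 := Nat.cast_ne_zero.mpr (Nat.factorial_ne_zero _)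
  have h3 : ((K-k).factorial : ℝ) ≠ 0 := Nat.cast_ne_zero.mpr (Nat.factorial_ne_zero _)
  have h4 : (K.factorial : ℝ) ≠ 0 := Nat.cast_ne_zero.mpr (Nat.factorial_ne_zero _)
  field_simp
  linear_combination -h1

lemma triangle_sum (M : ℕ) (f : ℕ → ℕ → ℝ) (hf : ∀ k p, M < k + p → f k p = 0) :
    ∑ k ∈ Finset.range (M+1), ∑ p ∈ Finset.range (M+1), f k p
      = ∑ K ∈ Finset.range (M+1), ∑ k ∈ Finset.range (K+1), f k (K-k) := by
  have h1 : ∑ k ∈ Finset.range (M+1), ∑ p ∈ Finset.range (M+1), f k p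
      = ∑ x ∈ ((Finset.range (M+1)) ×ˢ (Finset.range (M+1))).filter (fun x => x.1 + x.2 ≤ M),
          f x.1 x.2 := by
    rw [← Finset.sum_product']
    refine (Finset.sum_subset (Finset.filter_subset _ _) fun x hx hnx => ?_).symm
    have hgt : M < x.1 + x.2 := by
      by_contra hle
      exact hnx (Finset.mem_filter.mpr ⟨hx, by omega⟩)
    exact hf x.1 x.2 hgt
  have h2 : ∑ K ∈ Finset.range (M+1), ∑ k ∈ Finset.range (K+1), f k (K-k)
      = ∑ x ∈ (Finset.range (M+1)).sigma (fun K => Finset.range (K+1)), f x.2 (x.1 - x.2) := by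
    rw [Finset.sum_sigma]
  rw [h1, h2]
  refine Finset.sum_nbij' (fun x => ⟨x.1 + x.2, x.1⟩) (fun y => (y.2, y.1 - y.2)) ?_ ?_ ?_ ?_ ?_
  · intro x hx
    rw [Finset.mem_filter, Finset.mem_product, Finset.mem_range, Finset.mem_range] at hx
    simp only [Finset.mem_sigma, Finset.mem_range]
    omega
  · intro y hy
    simp only [Finset.mem_sigma, Finset.mem_range] at hy
    rw [Finset.mem_filter, Finset.mem_product, Finset.mem_range, Finset.mem_range]
    omega
  · intro x hx
    have : x.1 + x.2 - x.1 = x.2 := by omega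
    simp [this]
  · intro y hy
    simp only [Finset.mem_sigma, Finset.mem_range] at hy
    have h5 : y.2 + (y.1 - y.2) = y.1 := by omega
    simp only [h5]
  · intro x hx
    have : x.1 + x.2 - x.1 = x.2 := by omega
    rw [this]


lemma sum_reorder5 (A B C : Finset ℕ) (D E : ℕ → Finset ℕ) (F : ℕ → ℕ → ℕ → ℕ → ℕ → ℝ) :
    ∑ i ∈ A, ∑ k ∈ B, ∑ t ∈ E k, ∑ p ∈ C, ∑ s ∈ D p, F i k p s t
      = ∑ k ∈ B, ∑ p ∈ C, ∑ s ∈ D p, ∑ t ∈ E k, ∑ i ∈ A, F i k p s t := by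
  calc ∑ i ∈ A, ∑ k ∈ B, ∑ t ∈ E k, ∑ p ∈ C, ∑ s ∈ D p, F i k p s t
      = ∑ k ∈ B, ∑ i ∈ A, ∑ t ∈ E k, ∑ p ∈ C, ∑ s ∈ D p, F i k p s t := Finset.sum_comm
    _ = ∑ k ∈ B, ∑ t ∈ E k, ∑ i ∈ A, ∑ p ∈ C, ∑ s ∈ D p, F i k p s t :=
        Finset.sum_congr rfl fun k _ => Finset.sum_comm
    _ = ∑ k ∈ B, ∑ t ∈ E k, ∑ p ∈ C, ∑ i ∈ A, ∑ s ∈ D p, F i k p s t :=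
        Finset.sum_congr rfl fun k _ => Finset.sum_congr rfl fun t _ => Finset.sum_comm
    _ = ∑ k ∈ B, ∑ t ∈ E k, ∑ p ∈ C, ∑ s ∈ D p, ∑ i ∈ A, F i k p s t :=
        Finset.sum_congr rfl fun k _ => Finset.sum_congr rfl fun t _ =>
          Finset.sum_congr rfl fun p _ => Finset.sum_comm
    _ = ∑ k ∈ B, ∑ p ∈ C, ∑ t ∈ E k, ∑ s ∈ D p, ∑ i ∈ A, F i k p s t :=
        Finset.sum_congr rfl fun k _ => Finset.sum_comm
    _ = ∑ k ∈ B, ∑ p ∈ C, ∑ s ∈ D p, ∑ t ∈ E k, ∑ i ∈ A, F i k p s t :=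
        Finset.sum_congr rfl fun k _ => Finset.sum_congr rfl fun p _ => Finset.sum_comm

end AlgebraLemmas

section MoreAlgebra


lemma multinomial_univ_of_support {k : ℕ} {T : Finset (Fin k)} {f : Fin k → ℕ}
    (hf : ∀ i, f i ≠ 0 → i ∈ T) : Nat.multinomial T f = Nat.multinomial Finset.univ f := by
  have h1 := Nat.multinomial_spec T f
  have h2 := Nat.multinomial_spec Finset.univ f
  have hzero : ∀ i ∈ Finset.univ, i ∉ T → f i = 0 := fun i _ hi => by
    by_contra hne; exact hi (hf i hne)
  have hsum : ∑ i ∈ T, f i = ∑ i ∈ Finset.univ, f i :=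
    Finset.sum_subset (Finset.subset_univ T) hzero
  have hprod : ∏ i ∈ T, (f i).factorial = ∏ i ∈ Finset.univ, (f i).factorial :=
    Finset.prod_subset (Finset.subset_univ T) (fun i hu hi => by rw [hzero i hu hi]; rfl)
  have hpos : 0 < ∏ i ∈ Finset.univ, (f i).factorial :=
    Finset.prod_pos fun i _ => Nat.factorial_pos _
  apply Nat.eq_of_mul_eq_mul_left hpos
  calc (∏ i ∈ Finset.univ, (f i).factorial) * Nat.multinomial T f
      = (∏ i ∈ T, (f i).factorial) * Nat.multinomial T f := by rw [hprod]
    _ = (∑ i ∈ T, f i).factorial := h1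
    _ = (∑ i ∈ Finset.univ, f i).factorial := by rw [hsum]
    _ = (∏ i ∈ Finset.univ, (f i).factorial) * Nat.multinomial Finset.univ f := h2.symm

lemma posTuples_eq (k j : ℕ) :
    posTuples k j = (Finset.piAntidiag (Finset.univ : Finset (Fin k)) j).filter
      (fun l => ∀ i, 0 < l i) := by
  ext l
  simp [posTuples, Finset.Nat.mem_antidiagonalTuple, Finset.mem_piAntidiag, Nat.pos_iff_ne_zero]

lemma posTuples_empty {k j : ℕ} (h : j < k) : posTuples k j = ∅ := by
  rw [Finset.eq_empty_iff_forall_notMem]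
  intro l hl
  rw [posTuples, Finset.mem_filter, Finset.Nat.mem_antidiagonalTuple] at hl
  obtain ⟨hsum, hpos⟩ := hl
  have h1 : (k : ℕ) = ∑ _i : Fin k, 1 := by simp
  have h2 : ∑ i : Fin k, 1 ≤ ∑ i : Fin k, l i := Finset.sum_le_sum fun i _ => hpos i
  omega

lemma piAntidiag_subset_eq {k j : ℕ} (T : Finset (Fin k)) :
    Finset.piAntidiag T j = (Finset.piAntidiag (Finset.univ : Finset (Fin k)) j).filter
      (fun f => ∀ i, f i ≠ 0 → i ∈ T) := by
  ext f
  simp only [Finset.mem_piAntidiag, Finset.mem_filter]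
  constructor
  · rintro ⟨hsum, hsupp⟩
    refine ⟨⟨?_, fun i _ => Finset.mem_univ i⟩, hsupp⟩
    rw [← hsum]
    exact (Finset.sum_subset (Finset.subset_univ T)
      (fun i _ hi => by by_contra hne; exact hi (hsupp i hne))).symm
  · rintro ⟨⟨hsum, -⟩, hsupp⟩
    refine ⟨?_, hsupp⟩
    rw [← hsum]
    exact Finset.sum_subset (Finset.subset_univ T)
      (fun i _ hi => by by_contra hne; exact hi (hsupp i hne))

lemma sum_superset_sign {k : ℕ} (s : Finset (Fin k)) :
    ∑ T ∈ (Finset.univ : Finset (Fin k)).powerset.filter (fun T => s ⊆ T),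
      (-1:ℝ)^(k - T.card)
      = if s = Finset.univ then 1 else 0 := by
  have : ∑ T ∈ (Finset.univ : Finset (Fin k)).powerset.filter (fun T => s ⊆ T),
      (-1:ℝ)^(k - T.card) = ∑ U ∈ sᶜ.powerset, (-1:ℝ)^U.card := by
    refine Finset.sum_nbij' (fun T => Tᶜ) (fun U => Uᶜ) ?_ ?_ ?_ ?_ ?_
    · intro T hT
      rw [Finset.mem_filter] at hT
      rw [Finset.mem_powerset]
      exact Finset.compl_subset_compl.mpr hT.2
    · intro U hU
      rw [Finset.mem_powerset] at hU
      rw [Finset.mem_filter]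
      exact ⟨Finset.mem_powerset.mpr (Finset.subset_univ _),
        by simpa using Finset.compl_subset_compl.mpr hU⟩
    · intro T _; simp
    · intro U _; simp
    · intro T _
      rw [Finset.card_compl, Fintype.card_fin]
  rw [this]
  have hZ : ∑ U ∈ sᶜ.powerset, (-1:ℝ)^U.card
      = ((∑ U ∈ sᶜ.powerset, (-1:ℤ)^U.card : ℤ) : ℝ) := by push_cast; rfl
  rw [hZ, Finset.sum_powerset_neg_one_pow_card]
  by_cases h : s = Finset.univ
  · rw [if_pos h, if_pos ((Finset.compl_eq_empty_iff s).mpr h)]; norm_num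
  · rw [if_neg h, if_neg (fun hc => h ((Finset.compl_eq_empty_iff s).mp hc))]; norm_num

lemma key_poly (k m : ℕ) (R : ℝ) (v : Fin k → ℝ) :
    ∑ j ∈ Finset.Icc k m, (m.choose j : ℝ) *
        (∑ l ∈ posTuples k j, (Nat.multinomial Finset.univ l : ℝ) * ∏ i, v i ^ l i) * R^(m-j)
    = ∑ T ∈ (Finset.univ : Finset (Fin k)).powerset,
        (-1:ℝ)^(k - T.card) * ((∑ i ∈ T, v i) + R)^m := by
  -- expand the right side with the binomial and multinomial theorems
  have hexp : ∀ T ∈ (Finset.univ : Finset (Fin k)).powerset,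
      (-1:ℝ)^(k - T.card) * ((∑ i ∈ T, v i) + R)^m
      = ∑ j ∈ Finset.range (m+1), ∑ f ∈ (Finset.piAntidiag (Finset.univ : Finset (Fin k)) j),
          (if ∀ i, f i ≠ 0 → i ∈ T then
            (m.choose j : ℝ) * ((Nat.multinomial Finset.univ f : ℝ) * ∏ i, v i ^ f i) * R^(m-j)
              * (-1:ℝ)^(k - T.card) else 0) := by
    intro T _
    rw [add_pow]
    rw [Finset.mul_sum]
    refine Finset.sum_congr rfl fun j _ => ?_
    rw [Finset.sum_pow_eq_sum_piAntidiag]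
    have hterm : ∀ f ∈ Finset.piAntidiag T j,
        ((Nat.multinomial T f : ℝ) * ∏ i ∈ T, v i ^ f i)
        = (Nat.multinomial Finset.univ f : ℝ) * ∏ i, v i ^ f i := by
      intro f hf
      rw [Finset.mem_piAntidiag] at hf
      rw [multinomial_univ_of_support hf.2]
      congr 1
      exact Finset.prod_subset (Finset.subset_univ T) fun i _ hi => by
        have : f i = 0 := by by_contra hne; exact hi (hf.2 i hne)
        rw [this, pow_zero]
    rw [Finset.sum_congr rfl hterm, piAntidiag_subset_eq T, Finset.sum_filter]
    have hra : ∀ (Sg : ℝ), (-1:ℝ)^(k - T.card) * (Sg * R^(m-j) * (m.choose j : ℝ))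
        = Sg * ((m.choose j : ℝ) * R^(m-j) * (-1)^(k - T.card)) := fun Sg => by ring
    rw [hra, Finset.sum_mul]
    refine Finset.sum_congr rfl fun f _ => ?_
    split_ifs with h
    · ring
    · simp
  rw [Finset.sum_congr rfl hexp]
  rw [Finset.sum_comm]
  have hinner : ∀ j ∈ Finset.range (m+1),
      ∑ T ∈ (Finset.univ : Finset (Fin k)).powerset,
        ∑ f ∈ (Finset.piAntidiag (Finset.univ : Finset (Fin k)) j),
          (if ∀ i, f i ≠ 0 → i ∈ T then
            (m.choose j : ℝ) * ((Nat.multinomial Finset.univ f : ℝ) * ∏ i, v i ^ f i) * R^(m-j)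
              * (-1:ℝ)^(k - T.card) else 0)
      = (m.choose j : ℝ) *
          (∑ l ∈ posTuples k j, (Nat.multinomial Finset.univ l : ℝ) * ∏ i, v i ^ l i) * R^(m-j) := by
    intro j _
    rw [Finset.sum_comm]
    have hf1 : ∀ f ∈ (Finset.piAntidiag (Finset.univ : Finset (Fin k)) j),
        ∑ T ∈ (Finset.univ : Finset (Fin k)).powerset,
          (if ∀ i, f i ≠ 0 → i ∈ T then
            (m.choose j : ℝ) * ((Nat.multinomial Finset.univ f : ℝ) * ∏ i, v i ^ f i) * R^(m-j)
              * (-1:ℝ)^(k - T.card) else 0)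
        = (m.choose j : ℝ) * ((Nat.multinomial Finset.univ f : ℝ) * ∏ i, v i ^ f i) * R^(m-j)
            * (if (Finset.univ.filter (fun i => f i ≠ 0)) = Finset.univ then 1 else 0) := by
      intro f _
      have hcond : ∀ T : Finset (Fin k), (∀ i, f i ≠ 0 → i ∈ T)
          ↔ (Finset.univ.filter (fun i => f i ≠ 0)) ⊆ T := by
        intro T
        constructor
        · intro h i hi
          rw [Finset.mem_filter] at hi
          exact h i hi.2
        · intro h i hfi
          exact h (Finset.mem_filter.mpr ⟨Finset.mem_univ i, hfi⟩)
      calc ∑ T ∈ (Finset.univ : Finset (Fin k)).powerset,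
          (if ∀ i, f i ≠ 0 → i ∈ T then
            (m.choose j : ℝ) * ((Nat.multinomial Finset.univ f : ℝ) * ∏ i, v i ^ f i) * R^(m-j)
              * (-1:ℝ)^(k - T.card) else 0)
          = ∑ T ∈ (Finset.univ : Finset (Fin k)).powerset.filter
              (fun T => (Finset.univ.filter (fun i => f i ≠ 0)) ⊆ T),
              (m.choose j : ℝ) * ((Nat.multinomial Finset.univ f : ℝ) * ∏ i, v i ^ f i) * R^(m-j)
                * (-1:ℝ)^(k - T.card) := by
            rw [Finset.sum_filter]
            refine Finset.sum_congr rfl fun T _ => ?_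
            simp only [hcond T]
        _ = _ := by
            rw [← Finset.mul_sum, sum_superset_sign]
    rw [Finset.sum_congr rfl hf1]
    rw [← Finset.sum_filter_add_sum_filter_not _ (fun f => (Finset.univ.filter (fun i => f i ≠ 0)) = Finset.univ)]
    have hz : ∑ f ∈ (Finset.piAntidiag (Finset.univ : Finset (Fin k)) j).filter
        (fun f => ¬ (Finset.univ.filter (fun i => f i ≠ 0)) = Finset.univ),
        ((m.choose j : ℝ) * ((Nat.multinomial Finset.univ f : ℝ) * ∏ i, v i ^ f i) * R^(m-j)
          * (if (Finset.univ.filter (fun i => f i ≠ 0)) = Finset.univ then 1 else 0)) = 0 := by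
      refine Finset.sum_eq_zero fun f hf => ?_
      rw [Finset.mem_filter] at hf
      rw [if_neg hf.2, mul_zero]
    rw [hz, add_zero]
    have hpos : (Finset.piAntidiag (Finset.univ : Finset (Fin k)) j).filter
        (fun f => (Finset.univ.filter (fun i => f i ≠ 0)) = Finset.univ) = posTuples k j := by
      rw [posTuples_eq]
      refine Finset.filter_congr fun f _ => ?_
      rw [Finset.filter_eq_self]
      simp [Nat.pos_iff_ne_zero]
    rw [hpos]
    have hfin : ∀ f ∈ posTuples k j,
        ((m.choose j : ℝ) * ((Nat.multinomial Finset.univ f : ℝ) * ∏ i, v i ^ f i) * R^(m-j)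
          * (if (Finset.univ.filter (fun i => f i ≠ 0)) = Finset.univ then 1 else 0))
        = (m.choose j : ℝ) * ((Nat.multinomial Finset.univ f : ℝ) * ∏ i, v i ^ f i) * R^(m-j) := by
      intro f hf
      rw [posTuples_eq, Finset.mem_filter] at hf
      have : (Finset.univ.filter (fun i => f i ≠ 0)) = Finset.univ := by
        rw [Finset.filter_eq_self]
        intro i _
        exact Nat.pos_iff_ne_zero.mp (hf.2 i)
      rw [if_pos this, mul_one]
    rw [Finset.sum_congr rfl hfin, Finset.mul_sum, Finset.sum_mul]
  rw [Finset.sum_congr rfl hinner]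
  -- extend the Icc to range
  refine Finset.sum_subset ?_ ?_
  · intro j hj
    rw [Finset.mem_Icc] at hj
    rw [Finset.mem_range]
    omega
  · intro j hj hnot
    rw [Finset.mem_range] at hj
    rw [Finset.mem_Icc] at hnot
    have hjk : j < k := by omega
    rw [posTuples_empty hjk]
    simp

end MoreAlgebra

section PartB


lemma exists_perm_finset {α : Type*} [Fintype α] [DecidableEq α] (s t : Finset α)
    (h : s.card = t.card) : ∃ e : Equiv.Perm α, ∀ x, x ∈ s ↔ e x ∈ t := by
  classical
  have hc : sᶜ.card = tᶜ.card := by rw [Finset.card_compl, Finset.card_compl, h]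
  let e₁ : {x // x ∈ s} ≃ {x // x ∈ t} := Finset.equivOfCardEq h
  let e₂ : {x // ¬ x ∈ s} ≃ {x // ¬ x ∈ t} :=
    ((Equiv.subtypeEquivRight (fun x => (Finset.mem_compl (s := s)).symm)).trans
      (Finset.equivOfCardEq hc)).trans (Equiv.subtypeEquivRight (fun x => Finset.mem_compl))
  refine ⟨(Equiv.sumCompl (· ∈ s)).symm.trans ((e₁.sumCongr e₂).trans (Equiv.sumCompl (· ∈ t))),
    fun x => ?_⟩
  by_cases hx : x ∈ s
  · simp only [Equiv.trans_apply]
    rw [Equiv.sumCompl_symm_apply_of_pos hx]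
    simp only [Equiv.sumCongr_apply, Sum.map_inl, Equiv.sumCompl_apply_inl]
    exact iff_of_true hx (e₁ ⟨x, hx⟩).2
  · simp only [Equiv.trans_apply]
    rw [Equiv.sumCompl_symm_apply_of_neg hx]
    simp only [Equiv.sumCongr_apply, Sum.map_inr, Equiv.sumCompl_apply_inr]
    exact iff_of_false hx (e₂ ⟨x, hx⟩).2

section Meas

variable [IsProbabilityMeasure (volume : Measure Ω)]
variable {Y : ℕ → Ω → ℝ} {Y₀ : Ω → ℝ}

/-- Joint law of finitely many of the `Y i` is the product of the common law. -/
lemma joint_law (hMeas : ∀ i, Measurable (Y i))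
    (hIndep : iIndepFun Y volume)
    (hId : ∀ i, IdentDistrib (Y i) Y₀ volume volume) (N : ℕ) :
    Measure.map (fun ω (i : Fin N) => Y i ω) volume
      = Measure.pi (fun _ : Fin N => Measure.map Y₀ volume) := by
  classical
  set ν : Measure ℝ := Measure.map Y₀ volume with hν
  have hY₀ : AEMeasurable Y₀ (volume : Measure Ω) := (hId 0).aemeasurable_snd
  haveI : IsProbabilityMeasure ν := Measure.isProbabilityMeasure_map hY₀
  refine (Measure.pi_eq fun s hs => ?_).symm
  have hjm : Measurable (fun ω (i : Fin N) => Y i ω) := measurable_pi_lambda _ fun i => hMeas i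
  rw [Measure.map_apply hjm (MeasurableSet.univ_pi hs)]
  set sets : ℕ → Set ℝ := fun i => if h : i < N then s ⟨i, h⟩ else Set.univ with hsets
  have hsetsm : ∀ i ∈ Finset.range N, MeasurableSet (sets i) := by
    intro i _
    by_cases h : i < N
    · simp only [hsets, dif_pos h]; exact hs _
    · simp only [hsets, dif_neg h]; exact MeasurableSet.univ
  have hpre : (fun ω (i : Fin N) => Y i ω) ⁻¹' (Set.univ.pi s)
      = ⋂ i ∈ Finset.range N, Y i ⁻¹' (sets i) := by
    ext ω
    simp only [Set.mem_preimage, Set.mem_pi, Set.mem_univ, forall_true_left, Set.mem_iInter,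
      Finset.mem_range]
    constructor
    · intro h i hi
      simp only [hsets, dif_pos hi]
      exact h ⟨i, hi⟩
    · intro h i
      have := h i.1 i.2
      simpa only [hsets, dif_pos i.2, Fin.eta] using this
  rw [hpre, hIndep.measure_inter_preimage_eq_mul (Finset.range N) hsetsm]
  rw [← Fin.prod_univ_eq_prod_range (fun i => (volume : Measure Ω) (Y i ⁻¹' sets i)) N]
  refine Finset.prod_congr rfl fun i _ => ?_
  have h1 : sets (i : ℕ) = s i := by simp only [hsets, dif_pos i.2, Fin.eta]
  rw [h1, hν, ← (hId (i:ℕ)).map_eq, Measure.map_apply (hMeas (i:ℕ)) (hs i)]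

/-- Exchangeability: permuting the iid variables does not change integrals. -/
lemma exch (hMeas : ∀ i, Measurable (Y i))
    (hIndep : iIndepFun Y volume)
    (hId : ∀ i, IdentDistrib (Y i) Y₀ volume volume)
    (N : ℕ) (e : Equiv.Perm (Fin N)) {g : (Fin N → ℝ) → ℝ} (hg : Measurable g) :
    ∫ ω, g (fun i => Y (e i) ω) = ∫ ω, g (fun i => Y i ω) := by
  classical
  set ν : Measure ℝ := Measure.map Y₀ volume with hν
  have hY₀ : AEMeasurable Y₀ (volume : Measure Ω) := (hId 0).aemeasurable_snd
  haveI : IsProbabilityMeasure ν := Measure.isProbabilityMeasure_map hY₀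
  have hJ := joint_law hMeas hIndep hId N
  have hjm : Measurable (fun ω (i : Fin N) => Y i ω) := measurable_pi_lambda _ fun i => hMeas i
  have hρ : Measurable (fun (v : Fin N → ℝ) (i : Fin N) => v (e i)) :=
    measurable_pi_lambda _ fun i => measurable_pi_apply _
  have hmapρ : Measure.map (fun (v : Fin N → ℝ) (i : Fin N) => v (e i))
      (Measure.pi (fun _ : Fin N => ν)) = Measure.pi (fun _ : Fin N => ν) := by
    refine (Measure.pi_eq fun s hs => ?_).symm
    rw [Measure.map_apply hρ (MeasurableSet.univ_pi hs)]
    have hpre : (fun (v : Fin N → ℝ) (i : Fin N) => v (e i)) ⁻¹' (Set.univ.pi s)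
        = Set.univ.pi (fun j => s (e.symm j)) := by
      ext v
      simp only [Set.mem_preimage, Set.mem_pi, Set.mem_univ, forall_true_left]
      constructor
      · intro h j
        have := h (e.symm j)
        simpa using this
      · intro h i
        have := h (e i)
        simpa using this
    rw [hpre, Measure.pi_pi]
    exact Equiv.prod_comp e.symm fun i => ν (s i)
  calc ∫ ω, g (fun i => Y (e i) ω)
      = ∫ ω, (g ∘ (fun v (i : Fin N) => v (e i))) ((fun ω (i : Fin N) => Y i ω) ω) := rfl
    _ = ∫ v, (g ∘ (fun v (i : Fin N) => v (e i))) v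
          ∂(Measure.map (fun ω (i : Fin N) => Y i ω) volume) :=
        (integral_map hjm.aemeasurable ((hg.comp hρ).aestronglyMeasurable)).symm
    _ = ∫ v, g (fun i => v (e i)) ∂(Measure.pi (fun _ : Fin N => ν)) := by rw [hJ]; rfl
    _ = ∫ w, g w ∂(Measure.map (fun (v : Fin N → ℝ) (i : Fin N) => v (e i))
          (Measure.pi (fun _ : Fin N => ν))) :=
        (integral_map hρ.aemeasurable hg.aestronglyMeasurable).symm
    _ = ∫ w, g w ∂(Measure.pi (fun _ : Fin N => ν)) := by rw [hmapρ]
    _ = ∫ ω, g (fun i => Y i ω) := by rw [← hJ]; exact integral_map hjm.aemeasurable hg.aestronglyMeasurable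

/-- Key exchangeability: a subset-sum can be replaced by an initial-segment sum. -/
lemma kex (hMeas : ∀ i, Measurable (Y i))
    (hIndep : iIndepFun Y volume)
    (hId : ∀ i, IdentDistrib (Y i) Y₀ volume volume)
    (N a b : ℕ) (c d : ℝ) (B : Finset (Fin N)) :
    ∫ ω, (S Y N ω + c)^a * ((∑ i ∈ B, Y (i:ℕ) ω) + d)^b
      = ∫ ω, (S Y N ω + c)^a * (S Y B.card ω + d)^b := by
  classical
  have htN : B.card ≤ N := le_trans (Finset.card_le_univ B) (by simp)
  set B₀ : Finset (Fin N) :=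
    (Finset.range B.card).attachFin (fun m hm => lt_of_lt_of_le (Finset.mem_range.mp hm) htN)
    with hB₀
  have hB₀card : B₀.card = B.card := by
    rw [hB₀, Finset.card_attachFin, Finset.card_range]
  obtain ⟨e, he⟩ := exists_perm_finset B₀ B hB₀card
  set g : (Fin N → ℝ) → ℝ :=
    fun v => ((∑ i, v i) + c)^a * ((∑ i ∈ B₀, v i) + d)^b with hgdef
  have hg : Measurable g := by
    apply Measurable.mul
    · exact ((Finset.measurable_sum Finset.univ fun i _ => measurable_pi_apply i).add_const c).pow_const a
    · exact ((Finset.measurable_sum B₀ fun i _ => measurable_pi_apply i).add_const d).pow_const b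
  have h1 := exch hMeas hIndep hId N e hg
  have hsum_id : ∀ ω, ∑ i : Fin N, Y (i:ℕ) ω = S Y N ω := fun ω =>
    Fin.sum_univ_eq_sum_range (fun j => Y j ω) N
  have hsum_univ : ∀ ω, ∑ i : Fin N, Y ((e i : Fin N) : ℕ) ω = S Y N ω := by
    intro ω
    rw [Equiv.sum_comp e (fun i : Fin N => Y (i:ℕ) ω)]
    exact hsum_id ω
  have hsum_B : ∀ ω, ∑ i ∈ B₀, Y ((e i : Fin N) : ℕ) ω = ∑ j ∈ B, Y (j:ℕ) ω := by
    intro ω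
    refine Finset.sum_nbij' (fun i => e i) (fun j => e.symm j) ?_ ?_ ?_ ?_ ?_
    · intro i hi; exact (he i).mp hi
    · intro j hj
      have := he (e.symm j)
      rw [Equiv.apply_symm_apply] at this
      exact this.mpr hj
    · intro i _; exact e.symm_apply_apply i
    · intro j _; exact e.apply_symm_apply j
    · intro i _; rfl
  have hsum_B₀ : ∀ ω, ∑ i ∈ B₀, Y (i:ℕ) ω = S Y B.card ω := by
    intro ω
    refine Finset.sum_bij (fun i _ => (i : ℕ)) ?_ ?_ ?_ ?_
    · intro i hi
      rw [hB₀, Finset.mem_attachFin] at hi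
      exact hi
    · intro i hi j hj hij
      exact Fin.val_injective hij
    · intro m hm
      rw [Finset.mem_range] at hm
      have hmN : m < N := lt_of_lt_of_le hm htN
      refine ⟨⟨m, hmN⟩, ?_, rfl⟩
      rw [hB₀, Finset.mem_attachFin]
      simpa using hm
    · intro i _; rfl
  have e1 : ∫ ω, (S Y N ω + c)^a * ((∑ i ∈ B, Y (i:ℕ) ω) + d)^b
      = ∫ ω, g (fun i => Y ((e i : Fin N) : ℕ) ω) := by
    refine integral_congr_ae (Filter.EventuallyEq.of_eq (funext fun ω => ?_))
    rw [hgdef]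
    simp only
    rw [hsum_univ ω, hsum_B ω]
  have e2 : ∫ ω, g (fun i => Y (i:ℕ) ω) = ∫ ω, (S Y N ω + c)^a * (S Y B.card ω + d)^b := by
    refine integral_congr_ae (Filter.EventuallyEq.of_eq (funext fun ω => ?_))
    rw [hgdef]
    simp only
    rw [hsum_B₀ ω, hsum_id ω]
  rw [e1, ← e2]
  exact h1

lemma mono_integrable (hMeas : ∀ i, Measurable (Y i))
    (hIndep : iIndepFun Y volume)
    (hId : ∀ i, IdentDistrib (Y i) Y₀ volume volume)
    (hInt : ∀ m : ℕ, Integrable fun ω => (Y₀ ω) ^ m)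
    (N : ℕ) (e : ℕ → ℕ) : Integrable (fun ω => ∏ j ∈ Finset.range N, Y j ω ^ e j) := by
  induction N with
  | zero => simpa using integrable_const (1:ℝ)
  | succ N ih =>
    have hfam : iIndepFun (fun j => fun ω => Y j ω ^ e j) volume :=
      hIndep.comp (fun j x => x ^ e j) (fun j => measurable_id.pow_const (e j))
    have hmeas : ∀ j, Measurable fun ω => Y j ω ^ e j := fun j => (hMeas j).pow_const (e j)
    have hind : IndepFun (∏ j ∈ Finset.range N, fun ω => Y j ω ^ e j)
        (fun ω => Y N ω ^ e N) volume :=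
      hfam.indepFun_finset_prod_of_notMem hmeas Finset.notMem_range_self
    have hYN : Integrable (fun ω => Y N ω ^ e N) := by
      have hid2 : IdentDistrib (fun ω => Y N ω ^ e N) (fun ω => Y₀ ω ^ e N) volume volume := by
        have := (hId N).comp (measurable_id.pow_const (e N))
        exact this
      exact hid2.integrable_iff.mpr (hInt (e N))
    have hprodfun : (∏ j ∈ Finset.range N, fun ω => Y j ω ^ e j)
        = fun ω => ∏ j ∈ Finset.range N, Y j ω ^ e j := by
      funext ω; rw [Finset.prod_apply]
    have h := hind.integrable_mul (by rw [hprodfun]; exact ih) hYN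
    have heq : ((∏ j ∈ Finset.range N, fun ω => Y j ω ^ e j) * fun ω => Y N ω ^ e N)
        = fun ω => ∏ j ∈ Finset.range (N+1), Y j ω ^ e j := by
      funext ω; rw [Pi.mul_apply, Finset.prod_apply, Finset.prod_range_succ]
    rwa [heq] at h

end Meas

/-- The span of monomials in `Y 0, …, Y (N-1)`. -/
def YSpan (Y : ℕ → Ω → ℝ) (N : ℕ) : Submodule ℝ (Ω → ℝ) :=
  Submodule.span ℝ {f | ∃ e : ℕ → ℕ, f = fun ω => ∏ j ∈ Finset.range N, Y j ω ^ e j}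

section Span

variable {Y : ℕ → Ω → ℝ} {Y₀ : Ω → ℝ}

lemma YSpan_integrable [IsProbabilityMeasure (volume : Measure Ω)]
    (hMeas : ∀ i, Measurable (Y i))
    (hIndep : iIndepFun Y volume)
    (hId : ∀ i, IdentDistrib (Y i) Y₀ volume volume)
    (hInt : ∀ m : ℕ, Integrable fun ω => (Y₀ ω) ^ m)
    {N : ℕ} {f : Ω → ℝ} (hf : f ∈ YSpan Y N) : Integrable f := by
  induction hf using Submodule.span_induction with
  | mem x hx =>
    obtain ⟨e, rfl⟩ := hx
    exact mono_integrable hMeas hIndep hId hInt N e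
  | zero => exact integrable_zero _ _ _
  | add x y hx hy ihx ihy => exact ihx.add ihy
  | smul a x hx ih => exact ih.smul a

lemma YSpan_mul {N : ℕ} {f g : Ω → ℝ} (hf : f ∈ YSpan Y N) (hg : g ∈ YSpan Y N) :
    f * g ∈ YSpan Y N := by
  induction hf using Submodule.span_induction with
  | mem x hx =>
    obtain ⟨e1, rfl⟩ := hx
    induction hg using Submodule.span_induction with
    | mem z hz =>
      obtain ⟨e2, rfl⟩ := hz
      apply Submodule.subset_span
      refine ⟨fun j => e1 j + e2 j, ?_⟩
      funext ω
      rw [Pi.mul_apply, ← Finset.prod_mul_distrib]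
      exact Finset.prod_congr rfl fun j _ => (pow_add _ _ _).symm
    | zero => rw [mul_zero]; exact Submodule.zero_mem _
    | add z w hz hw ihz ihw => rw [mul_add]; exact Submodule.add_mem _ ihz ihw
    | smul a z hz ih => rw [mul_smul_comm]; exact Submodule.smul_mem _ a ih
  | zero => rw [zero_mul]; exact Submodule.zero_mem _
  | add x y hx hy ihx ihy => rw [add_mul]; exact Submodule.add_mem _ ihx ihy
  | smul a x hx ih => rw [smul_mul_assoc]; exact Submodule.smul_mem _ a ih

lemma Y_mem_span {N j : ℕ} (hj : j < N) : (fun ω => Y j ω) ∈ YSpan Y N := by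
  apply Submodule.subset_span
  refine ⟨fun i => if i = j then 1 else 0, ?_⟩
  funext ω
  rw [eq_comm]
  calc ∏ i ∈ Finset.range N, Y i ω ^ (if i = j then 1 else 0)
      = ∏ i ∈ Finset.range N, (if i = j then Y i ω else 1) :=
        Finset.prod_congr rfl fun i _ => by split <;> simp
    _ = Y j ω := by
        rw [Finset.prod_ite_eq' (Finset.range N) j (fun i => Y i ω),
          if_pos (Finset.mem_range.mpr hj)]

lemma const_mem_span (N : ℕ) (c : ℝ) : (fun _ => c : Ω → ℝ) ∈ YSpan Y N := by
  have h1 : (fun _ => (1:ℝ) : Ω → ℝ) ∈ YSpan Y N :=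
    Submodule.subset_span ⟨fun _ => 0, by funext ω; simp⟩
  have h2 := Submodule.smul_mem (YSpan Y N) c h1
  have : c • (fun _ => (1:ℝ) : Ω → ℝ) = (fun _ => c : Ω → ℝ) := by
    funext ω; simp
  rwa [this] at h2

lemma sumY_mem_span {N : ℕ} (A : Finset ℕ) (hA : ∀ j ∈ A, j < N) (c : ℝ) :
    (fun ω => (∑ j ∈ A, Y j ω) + c) ∈ YSpan Y N := by
  have hs : (fun ω => ∑ j ∈ A, Y j ω) ∈ YSpan Y N := by
    have heq : (fun ω => ∑ j ∈ A, Y j ω) = ∑ j ∈ A, (fun ω => Y j ω) := by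
      funext ω; rw [Finset.sum_apply]
    rw [heq]
    exact Submodule.sum_mem _ fun j hj => Y_mem_span (hA j hj)
  exact Submodule.add_mem _ hs (const_mem_span N c)

lemma pow_mem_span {N : ℕ} {f : Ω → ℝ} (hf : f ∈ YSpan Y N) (p : ℕ) :
    (fun ω => f ω ^ p) ∈ YSpan Y N := by
  induction p with
  | zero =>
    have : (fun ω => f ω ^ 0) = (fun _ => (1:ℝ) : Ω → ℝ) := by funext ω; simp
    rw [this]; exact const_mem_span N 1
  | succ p ih =>
    have : (fun ω => f ω ^ (p+1)) = (fun ω => f ω ^ p) * f := by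
      funext ω; rw [Pi.mul_apply, pow_succ]
    rw [this]; exact YSpan_mul ih hf

lemma finMono_mem_span (k : ℕ) (l : Fin k → ℕ) :
    (fun ω => ∏ i' : Fin k, Y (i':ℕ) ω ^ l i') ∈ YSpan Y k := by
  apply Submodule.subset_span
  refine ⟨fun j => if h : j < k then l ⟨j, h⟩ else 0, ?_⟩
  funext ω
  rw [eq_comm, ← Fin.prod_univ_eq_prod_range
    (fun j => Y j ω ^ (if h : j < k then l ⟨j, h⟩ else 0)) k]
  exact Finset.prod_congr rfl fun i _ => by rw [dif_pos i.isLt, Fin.eta]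

end Span

section Split
variable [IsProbabilityMeasure (volume : Measure Ω)]
variable {Y : ℕ → Ω → ℝ} {Y₀ : Ω → ℝ}

lemma range_filter_lt (k t : ℕ) (ht : t ≤ k) :
    (Finset.range k).filter (fun j => j < t) = Finset.range t := by
  ext x
  simp only [Finset.mem_filter, Finset.mem_range]
  omega

lemma split_integral (hMeas : ∀ i, Measurable (Y i))
    (hIndep : iIndepFun Y volume)
    (k s t nn mm ii : ℕ) (c d : ℝ) (ht : t ≤ k) :
    ∫ ω, (∑ j ∈ Finset.Ico k (k+s), Y j ω)^ii * ((S Y k ω + c)^nn * (S Y t ω + d)^mm)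
      = (∫ ω, (∑ j ∈ Finset.Ico k (k+s), Y j ω)^ii)
        * ∫ ω, (S Y k ω + c)^nn * (S Y t ω + d)^mm := by
  classical
  set X : Ω → ℝ := fun ω => (∑ j ∈ Finset.Ico k (k+s), Y j ω)^ii with hXdef
  set Z : Ω → ℝ := fun ω => (S Y k ω + c)^nn * (S Y t ω + d)^mm with hZdef
  have hdisj : Disjoint (Finset.Ico k (k+s)) (Finset.range k) := by
    rw [Finset.disjoint_left]
    intro x hx hx'
    rw [Finset.mem_Ico] at hx
    rw [Finset.mem_range] at hx'
    omega
  have hbase := hIndep.indepFun_finset (Finset.Ico k (k+s)) (Finset.range k) hdisj hMeas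
  set φ : (↥(Finset.Ico k (k+s)) → ℝ) → ℝ :=
    fun w => (∑ j ∈ (Finset.Ico k (k+s)).attach, w j)^ii with hφdef
  set ψ : (↥(Finset.range k) → ℝ) → ℝ := fun w =>
    ((∑ j ∈ (Finset.range k).attach, w j) + c)^nn *
    ((∑ j ∈ (Finset.range k).attach, (if (j:ℕ) < t then w j else 0)) + d)^mm with hψdef
  have hφ : Measurable φ :=
    (Finset.measurable_sum _ fun j _ => measurable_pi_apply j).pow_const ii
  have hψ : Measurable ψ := by
    apply Measurable.mul
    · exact ((Finset.measurable_sum _ fun j _ => measurable_pi_apply j).add_const c).pow_const nn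
    · refine ((Finset.measurable_sum _ fun j _ => ?_).add_const d).pow_const mm
      by_cases h : (j:ℕ) < t
      · simpa [h] using measurable_pi_apply (X := fun _ : ↥(Finset.range k) => ℝ) j
      · simpa [h] using measurable_const (α := ℝ) (β := (↥(Finset.range k) → ℝ)) (a := (0:ℝ))
  have hXeq : X = φ ∘ (fun ω (j : ↥(Finset.Ico k (k+s))) => Y (j:ℕ) ω) := by
    funext ω
    simp only [Function.comp_apply, hφdef, hXdef]
    rw [Finset.sum_attach (Finset.Ico k (k+s)) (fun j => Y j ω)]
  have hZeq : Z = ψ ∘ (fun ω (j : ↥(Finset.range k)) => Y (j:ℕ) ω) := by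
    funext ω
    simp only [Function.comp_apply, hψdef, hZdef]
    rw [Finset.sum_attach (Finset.range k) (fun j => Y j ω)]
    have h2 : ∑ j ∈ (Finset.range k).attach, (if (j:ℕ) < t then Y (j:ℕ) ω else 0)
        = S Y t ω := by
      rw [Finset.sum_attach (Finset.range k) (fun j => if j < t then Y j ω else 0)]
      rw [← Finset.sum_filter, range_filter_lt k t ht]
      rfl
    rw [h2]
    rfl
  have hXZ : IndepFun X Z volume := by
    rw [hXeq, hZeq]
    exact hbase.comp hφ hψ
  have hXm : Measurable X :=
    (Finset.measurable_sum _ fun j _ => hMeas j).pow_const ii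
  have hZm : Measurable Z := by
    apply Measurable.mul
    · exact ((Finset.measurable_sum _ fun j _ => hMeas j).add_const c).pow_const nn
    · exact ((Finset.measurable_sum _ fun j _ => hMeas j).add_const d).pow_const mm
  exact hXZ.integral_mul_eq_mul_integral hXm.aestronglyMeasurable hZm.aestronglyMeasurable

end Split

section Extra
variable {Y : ℕ → Ω → ℝ} {Y₀ : Ω → ℝ}

lemma finMono_mem_span' {kk N : ℕ} (hkN : kk ≤ N) (l : Fin kk → ℕ) :
    (fun ω => ∏ i' : Fin kk, Y (i':ℕ) ω ^ l i') ∈ YSpan Y N := by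
  apply Submodule.subset_span
  refine ⟨fun j => if h : j < kk then l ⟨j, h⟩ else 0, ?_⟩
  funext ω
  rw [eq_comm]
  calc ∏ j ∈ Finset.range N, Y j ω ^ (if h : j < kk then l ⟨j, h⟩ else 0)
      = ∏ j ∈ Finset.range kk, Y j ω ^ (if h : j < kk then l ⟨j, h⟩ else 0) := by
        refine (Finset.prod_subset (Finset.range_subset_range.mpr hkN) ?_).symm
        intro j _ hj
        rw [Finset.mem_range] at hj
        rw [dif_neg hj, pow_zero]
    _ = ∏ i' : Fin kk, Y (i':ℕ) ω ^ l i' := by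
        rw [← Fin.prod_univ_eq_prod_range
          (fun j => Y j ω ^ (if h : j < kk then l ⟨j, h⟩ else 0)) kk]
        exact Finset.prod_congr rfl fun i _ => by rw [dif_pos i.isLt, Fin.eta]

lemma sumYFin_mem_span {kk N : ℕ} (hkN : kk ≤ N) (B : Finset (Fin kk)) (d : ℝ) :
    (fun ω => (∑ i ∈ B, Y (i:ℕ) ω) + d) ∈ YSpan Y N := by
  have hs : (fun ω => ∑ i ∈ B, Y (i:ℕ) ω) ∈ YSpan Y N := by
    have heq : (fun ω => ∑ i ∈ B, Y (i:ℕ) ω) = ∑ i ∈ B, (fun ω => Y (i:ℕ) ω) := by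
      funext ω; rw [Finset.sum_apply]
    rw [heq]
    exact Submodule.sum_mem _ fun i _ => Y_mem_span (lt_of_lt_of_le i.isLt hkN)
  exact Submodule.add_mem _ hs (const_mem_span N d)

end Extra

section CentSec
variable [IsProbabilityMeasure (volume : Measure Ω)]
variable {Y : ℕ → Ω → ℝ} {Y₀ : Ω → ℝ}

lemma cent (hMeas : ∀ i, Measurable (Y i))
    (hIndep : iIndepFun Y volume)
    (hId : ∀ i, IdentDistrib (Y i) Y₀ volume volume)
    (hInt : ∀ m' : ℕ, Integrable fun ω => (Y₀ ω) ^ m')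
    (N kk aa mm2 : ℕ) (cc dd : ℝ) (hkN : kk ≤ N) :
    ∑ j ∈ Finset.Icc kk mm2, (mm2.choose j : ℝ) *
        (∑ l ∈ posTuples kk j, (Nat.multinomial Finset.univ l : ℝ) *
          (∫ ω, (S Y N ω + cc)^aa * ∏ i' : Fin kk, (Y (i':ℕ) ω) ^ (l i')) * dd^(mm2-j))
      = ∑ t ∈ Finset.range (kk+1), (kk.choose t : ℝ) * (-1:ℝ)^(kk-t) *
          ∫ ω, (S Y N ω + cc)^aa * (S Y t ω + dd)^mm2 := by
  classical
  have hf_mem : (fun ω => (S Y N ω + cc)^aa) ∈ YSpan Y N :=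
    pow_mem_span (sumY_mem_span (Finset.range N) (fun j hj => Finset.mem_range.mp hj) cc) aa
  have hint1 : ∀ (l : Fin kk → ℕ),
      Integrable (fun ω => (S Y N ω + cc)^aa * ∏ i' : Fin kk, (Y (i':ℕ) ω) ^ (l i')) := fun l =>
    YSpan_integrable hMeas hIndep hId hInt (YSpan_mul hf_mem (finMono_mem_span' hkN l))
  have hint2 : ∀ (T : Finset (Fin kk)),
      Integrable (fun ω => (S Y N ω + cc)^aa * ((∑ i' ∈ T, Y (i':ℕ) ω) + dd)^mm2) := fun T =>
    YSpan_integrable hMeas hIndep hId hInt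
      (YSpan_mul hf_mem (pow_mem_span (sumYFin_mem_span hkN T dd) mm2))
  have hA : ∑ j ∈ Finset.Icc kk mm2, (mm2.choose j : ℝ) *
        (∑ l ∈ posTuples kk j, (Nat.multinomial Finset.univ l : ℝ) *
          (∫ ω, (S Y N ω + cc)^aa * ∏ i' : Fin kk, (Y (i':ℕ) ω) ^ (l i')) * dd^(mm2-j))
      = ∫ ω, (S Y N ω + cc)^aa *
          (∑ j ∈ Finset.Icc kk mm2, (mm2.choose j : ℝ) *
            (∑ l ∈ posTuples kk j, (Nat.multinomial Finset.univ l : ℝ) *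
              ∏ i' : Fin kk, (Y (i':ℕ) ω) ^ (l i')) * dd^(mm2-j)) := by
    have hjterm : ∀ j ∈ Finset.Icc kk mm2,
        (mm2.choose j : ℝ) *
          (∑ l ∈ posTuples kk j, (Nat.multinomial Finset.univ l : ℝ) *
            (∫ ω, (S Y N ω + cc)^aa * ∏ i' : Fin kk, (Y (i':ℕ) ω) ^ (l i')) * dd^(mm2-j))
        = ∫ ω, (S Y N ω + cc)^aa *
            ((mm2.choose j : ℝ) * (∑ l ∈ posTuples kk j, (Nat.multinomial Finset.univ l : ℝ) *
              ∏ i' : Fin kk, (Y (i':ℕ) ω) ^ (l i')) * dd^(mm2-j)) := by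
      intro j _
      have hl : ∀ l ∈ posTuples kk j,
          (Nat.multinomial Finset.univ l : ℝ) *
            (∫ ω, (S Y N ω + cc)^aa * ∏ i' : Fin kk, (Y (i':ℕ) ω) ^ (l i')) * dd^(mm2-j)
          = ∫ ω, ((Nat.multinomial Finset.univ l : ℝ) * dd^(mm2-j)) *
              ((S Y N ω + cc)^aa * ∏ i' : Fin kk, (Y (i':ℕ) ω) ^ (l i')) := by
        intro l _
        rw [integral_const_mul]
        ring
      rw [Finset.sum_congr rfl hl,
        ← integral_finset_sum _ (fun l _ => ((hint1 l).const_mul _)), ← integral_const_mul]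
      refine integral_congr_ae (Filter.EventuallyEq.of_eq (funext fun ω => ?_))
      simp only [Finset.mul_sum, Finset.sum_mul]
      exact Finset.sum_congr rfl fun l _ => by ring
    rw [Finset.sum_congr rfl hjterm,
      ← integral_finset_sum _ (fun j _ => ?_)]
    · refine integral_congr_ae (Filter.EventuallyEq.of_eq (funext fun ω => ?_))
      rw [Finset.mul_sum]
    · -- integrability of each j-term
      have : (fun ω => (S Y N ω + cc)^aa *
          ((mm2.choose j : ℝ) * (∑ l ∈ posTuples kk j, (Nat.multinomial Finset.univ l : ℝ) *
            ∏ i' : Fin kk, (Y (i':ℕ) ω) ^ (l i')) * dd^(mm2-j)))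
          = fun ω => ∑ l ∈ posTuples kk j, ((mm2.choose j : ℝ) * (Nat.multinomial Finset.univ l : ℝ)
              * dd^(mm2-j)) * ((S Y N ω + cc)^aa * ∏ i' : Fin kk, (Y (i':ℕ) ω) ^ (l i')) := by
        funext ω
        simp only [Finset.mul_sum, Finset.sum_mul]
        exact Finset.sum_congr rfl fun l _ => by ring
      rw [this]
      exact integrable_finset_sum _ (fun l _ => ((hint1 l).const_mul _))
  rw [hA]
  have hB : ∫ ω, (S Y N ω + cc)^aa *
        (∑ j ∈ Finset.Icc kk mm2, (mm2.choose j : ℝ) *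
          (∑ l ∈ posTuples kk j, (Nat.multinomial Finset.univ l : ℝ) *
            ∏ i' : Fin kk, (Y (i':ℕ) ω) ^ (l i')) * dd^(mm2-j))
      = ∫ ω, (S Y N ω + cc)^aa *
          (∑ T ∈ (Finset.univ : Finset (Fin kk)).powerset,
            (-1:ℝ)^(kk - T.card) * ((∑ i' ∈ T, Y (i':ℕ) ω) + dd)^mm2) := by
    refine integral_congr_ae (Filter.EventuallyEq.of_eq (funext fun ω => ?_))
    rw [key_poly kk mm2 dd (fun i' => Y (i':ℕ) ω)]
  rw [hB]
  have hC : ∫ ω, (S Y N ω + cc)^aa *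
        (∑ T ∈ (Finset.univ : Finset (Fin kk)).powerset,
          (-1:ℝ)^(kk - T.card) * ((∑ i' ∈ T, Y (i':ℕ) ω) + dd)^mm2)
      = ∑ T ∈ (Finset.univ : Finset (Fin kk)).powerset, (-1:ℝ)^(kk - T.card) *
          ∫ ω, (S Y N ω + cc)^aa * ((∑ i' ∈ T, Y (i':ℕ) ω) + dd)^mm2 := by
    have h1 : ∀ ω, (S Y N ω + cc)^aa *
        (∑ T ∈ (Finset.univ : Finset (Fin kk)).powerset,
          (-1:ℝ)^(kk - T.card) * ((∑ i' ∈ T, Y (i':ℕ) ω) + dd)^mm2)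
        = ∑ T ∈ (Finset.univ : Finset (Fin kk)).powerset,
            (-1:ℝ)^(kk - T.card) *
              ((S Y N ω + cc)^aa * ((∑ i' ∈ T, Y (i':ℕ) ω) + dd)^mm2) := by
      intro ω
      simp only [Finset.mul_sum]
      exact Finset.sum_congr rfl fun T _ => by ring
    calc ∫ ω, (S Y N ω + cc)^aa * (∑ T ∈ (Finset.univ : Finset (Fin kk)).powerset,
          (-1:ℝ)^(kk - T.card) * ((∑ i' ∈ T, Y (i':ℕ) ω) + dd)^mm2)
        = ∫ ω, ∑ T ∈ (Finset.univ : Finset (Fin kk)).powerset,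
            (-1:ℝ)^(kk - T.card) *
              ((S Y N ω + cc)^aa * ((∑ i' ∈ T, Y (i':ℕ) ω) + dd)^mm2) := by
          exact integral_congr_ae (Filter.EventuallyEq.of_eq (funext h1))
      _ = ∑ T ∈ (Finset.univ : Finset (Fin kk)).powerset,
            ∫ ω, (-1:ℝ)^(kk - T.card) *
              ((S Y N ω + cc)^aa * ((∑ i' ∈ T, Y (i':ℕ) ω) + dd)^mm2) :=
          integral_finset_sum _ (fun T _ => ((hint2 T).const_mul _))
      _ = _ := Finset.sum_congr rfl fun T _ => integral_const_mul _ _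
  rw [hC]
  have hD : ∀ T ∈ (Finset.univ : Finset (Fin kk)).powerset,
      (-1:ℝ)^(kk - T.card) *
        ∫ ω, (S Y N ω + cc)^aa * ((∑ i' ∈ T, Y (i':ℕ) ω) + dd)^mm2
      = (-1:ℝ)^(kk - T.card) *
        ∫ ω, (S Y N ω + cc)^aa * (S Y T.card ω + dd)^mm2 := by
    intro T _
    congr 1
    have hmap : ∀ ω, (∑ i ∈ T.map (Fin.castLEEmb hkN), Y (i:ℕ) ω) = ∑ i' ∈ T, Y (i':ℕ) ω := by
      intro ω
      rw [Finset.sum_map]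
      exact Finset.sum_congr rfl fun i _ => by simp
    have hk := kex hMeas hIndep hId N aa mm2 cc dd (T.map (Fin.castLEEmb hkN))
    rw [Finset.card_map] at hk
    calc ∫ ω, (S Y N ω + cc)^aa * ((∑ i' ∈ T, Y (i':ℕ) ω) + dd)^mm2
        = ∫ ω, (S Y N ω + cc)^aa * ((∑ i ∈ T.map (Fin.castLEEmb hkN), Y (i:ℕ) ω) + dd)^mm2 := by
          refine integral_congr_ae (Filter.EventuallyEq.of_eq (funext fun ω => ?_))
          rw [hmap ω]
      _ = _ := hk
  rw [Finset.sum_congr rfl hD]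
  -- group by cardinality
  rw [Finset.sum_powerset]
  have hcard : ((Finset.univ : Finset (Fin kk))).card = kk := by simp
  rw [hcard]
  refine Finset.sum_congr rfl fun t ht => ?_
  have hT : ∀ T ∈ Finset.powersetCard t (Finset.univ : Finset (Fin kk)),
      (-1:ℝ)^(kk - T.card) * ∫ ω, (S Y N ω + cc)^aa * (S Y T.card ω + dd)^mm2
      = (-1:ℝ)^(kk - t) * ∫ ω, (S Y N ω + cc)^aa * (S Y t ω + dd)^mm2 := by
    intro T hT
    rw [(Finset.mem_powersetCard.mp hT).2]
  rw [Finset.sum_congr rfl hT, Finset.sum_const, Finset.card_powersetCard, hcard,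
    nsmul_eq_mul]
  ring

lemma shift_int (hMeas : ∀ i, Measurable (Y i))
    (hIndep : iIndepFun Y volume)
    (hId : ∀ i, IdentDistrib (Y i) Y₀ volume volume)
    (k s' i : ℕ) :
    (∫ ω, (∑ j ∈ Finset.Ico k (k+s'), Y j ω)^i) = ∫ ω, (S Y s' ω)^i := by
  classical
  have hbd : ∀ m' ∈ Finset.Ico k (k+s'), m' < k + s' := fun m' hm' => (Finset.mem_Ico.mp hm').2
  set B : Finset (Fin (k+s')) := (Finset.Ico k (k+s')).attachFin hbd with hB
  have hcard : B.card = s' := by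
    rw [hB, Finset.card_attachFin, Nat.card_Ico, Nat.add_sub_cancel_left]
  have hk := kex hMeas hIndep hId (k+s') 0 i 0 0 B
  rw [hcard] at hk
  have hBsum : ∀ ω, ∑ x ∈ B, Y (x:ℕ) ω = ∑ j ∈ Finset.Ico k (k+s'), Y j ω := by
    intro ω
    refine Finset.sum_bij (fun x _ => (x:ℕ)) ?_ ?_ ?_ ?_
    · intro x hx; rw [hB, Finset.mem_attachFin] at hx; exact hx
    · intro a _ b _ hab; exact Fin.val_injective hab
    · intro m' hm'
      refine ⟨⟨m', hbd m' hm'⟩, ?_, rfl⟩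
      rw [hB, Finset.mem_attachFin]
      exact hm'
    · intro x _; rfl
  calc (∫ ω, (∑ j ∈ Finset.Ico k (k+s'), Y j ω)^i)
      = ∫ ω, (S Y (k+s') ω + 0)^0 * ((∑ x ∈ B, Y (x:ℕ) ω) + 0)^i := by
        refine integral_congr_ae (Filter.EventuallyEq.of_eq (funext fun ω => ?_))
        rw [pow_zero, one_mul, add_zero, hBsum ω]
    _ = ∫ ω, (S Y (k+s') ω + 0)^0 * (S Y s' ω + 0)^i := hk
    _ = ∫ ω, (S Y s' ω)^i := by
        refine integral_congr_ae (Filter.EventuallyEq.of_eq (funext fun ω => ?_))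
        rw [pow_zero, one_mul, add_zero]

end CentSec

end PartB

theorem probBivRBell_recurrence_via_Bell
    [IsProbabilityMeasure (volume : Measure Ω)]
    (Y : ℕ → Ω → ℝ) (Y₀ : Ω → ℝ)
    (hMeas : ∀ i, Measurable (Y i))
    (hIndep : iIndepFun Y volume)
    (hId : ∀ i, IdentDistrib (Y i) Y₀ volume volume)
    (hInt : ∀ m : ℕ, Integrable fun ω => (Y₀ ω) ^ m)
    (r : ℕ) (hr : 0 < r)
    (m n : ℕ) (x y : ℝ) :
    phiRBiv Y r (m + n) x y =
      ∑ i ∈ Finset.range (n + 1), ∑ k ∈ Finset.range (m + 1),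
        ((k.factorial : ℝ))⁻¹ * (n.choose i : ℝ) * fallFac x k * y ^ k *
          phiBiv Y i (x - (k : ℝ)) y *
          ∑ j ∈ Finset.Icc k m, (m.choose j : ℝ) *
            ∑ l ∈ posTuples k j,
              (Nat.multinomial Finset.univ l : ℝ) *
                (∫ ω, (S Y k ω + (r : ℝ)) ^ (n - i) * ∏ i' : Fin k, (Y i' ω) ^ (l i')) *
                (r : ℝ) ^ (m - j) := by
  classical
  -- step lemmas
  have h1 : ∀ i k : ℕ,
      (∑ j ∈ Finset.Icc k m, (m.choose j : ℝ) *
        ∑ l ∈ posTuples k j,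
          (Nat.multinomial Finset.univ l : ℝ) *
            (∫ ω, (S Y k ω + (r : ℝ)) ^ (n - i) * ∏ i' : Fin k, (Y i' ω) ^ (l i')) *
            (r : ℝ) ^ (m - j))
      = ∑ t ∈ Finset.range (k+1), (k.choose t : ℝ) * (-1:ℝ)^(k-t) *
          ∫ ω, (S Y k ω + (r:ℝ))^(n-i) * (S Y t ω + (r:ℝ))^m := by
    intro i k
    exact cent hMeas hIndep hId hInt k k (n-i) m (r:ℝ) (r:ℝ) le_rfl
  have h2 : ∀ i p : ℕ, i < p →
      (∑ s' ∈ Finset.range (p+1), (p.choose s' : ℝ) * (-1:ℝ)^(p-s') *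
        ∫ ω, (S Y s' ω)^i) = 0 := by
    intro i p hip
    have hc := cent hMeas hIndep hId hInt p p 0 i 0 0 le_rfl
    rw [show Finset.Icc p i = ∅ from Finset.Icc_eq_empty (by omega), Finset.sum_empty] at hc
    calc (∑ s' ∈ Finset.range (p+1), (p.choose s' : ℝ) * (-1:ℝ)^(p-s') *
          ∫ ω, (S Y s' ω)^i)
        = ∑ t ∈ Finset.range (p+1), (p.choose t : ℝ) * (-1:ℝ)^(p-t) *
            ∫ ω, (S Y p ω + 0)^0 * (S Y t ω + 0)^i := by
          refine Finset.sum_congr rfl fun t _ => ?_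
          congr 1
          refine integral_congr_ae (Filter.EventuallyEq.of_eq (funext fun ω => ?_))
          rw [pow_zero, one_mul, add_zero]
      _ = 0 := hc.symm
  have h4 : ∀ k : ℕ, ∀ i ∈ Finset.range (n+1), phiBiv Y i (x - (k:ℝ)) y
      = ∑ p ∈ Finset.range (n+1), probStirling Y i p * fallFac (x - (k:ℝ)) p * y^p := by
    intro k i hi
    rw [Finset.mem_range] at hi
    unfold phiBiv
    refine Finset.sum_subset (Finset.range_subset_range.mpr (by omega)) ?_
    intro p hp hnp
    rw [Finset.mem_range] at hp hnp
    have hip : i < p := by omega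
    have : probStirling Y i p = 0 := by
      unfold probStirling
      rw [h2 i p hip, mul_zero]
    rw [this, zero_mul, zero_mul]
  have h5 : ∀ k s' t : ℕ, t ≤ k →
      (∑ i ∈ Finset.range (n+1), (n.choose i : ℝ) *
        ((∫ ω, (S Y s' ω)^i) *
          ∫ ω, (S Y k ω + (r:ℝ))^(n-i) * (S Y t ω + (r:ℝ))^m))
      = ∫ ω, (S Y (k+s') ω + (r:ℝ))^n * (S Y t ω + (r:ℝ))^m := by
    intro k s' t htk
    have hIcoMem : (fun ω => ∑ j ∈ Finset.Ico k (k+s'), Y j ω) ∈ YSpan Y (k+s') := by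
      have h0 := sumY_mem_span (Y := Y) (Finset.Ico k (k+s'))
        (fun j hj => (Finset.mem_Ico.mp hj).2) 0
      have heq0 : (fun ω => (∑ j ∈ Finset.Ico k (k+s'), Y j ω) + 0)
          = (fun ω => ∑ j ∈ Finset.Ico k (k+s'), Y j ω) := by funext ω; rw [add_zero]
      rwa [heq0] at h0
    have hmem : ∀ i : ℕ, (fun ω => (∑ j ∈ Finset.Ico k (k+s'), Y j ω)^i *
        ((S Y k ω + (r:ℝ))^(n-i) * (S Y t ω + (r:ℝ))^m)) ∈ YSpan Y (k+s') := by
      intro i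
      exact YSpan_mul (pow_mem_span hIcoMem i)
        (YSpan_mul
          (pow_mem_span (sumY_mem_span (Finset.range k)
            (fun j hj => by rw [Finset.mem_range] at hj; omega) (r:ℝ)) (n-i))
          (pow_mem_span (sumY_mem_span (Finset.range t)
            (fun j hj => by rw [Finset.mem_range] at hj; omega) (r:ℝ)) m))
    have hsplitS : ∀ ω, S Y k ω + (∑ j ∈ Finset.Ico k (k+s'), Y j ω) = S Y (k+s') ω := by
      intro ω
      have e1 : S Y k ω = ∑ j ∈ Finset.Ico 0 k, Y j ω := by
        rw [← Finset.range_eq_Ico]; rfl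
      have e2 : S Y (k+s') ω = ∑ j ∈ Finset.Ico 0 (k+s'), Y j ω := by
        rw [← Finset.range_eq_Ico]; rfl
      rw [e1, e2]
      exact Finset.sum_Ico_consecutive _ (Nat.zero_le k) (Nat.le_add_right k s')
    calc (∑ i ∈ Finset.range (n+1), (n.choose i : ℝ) *
          ((∫ ω, (S Y s' ω)^i) *
            ∫ ω, (S Y k ω + (r:ℝ))^(n-i) * (S Y t ω + (r:ℝ))^m))
        = ∑ i ∈ Finset.range (n+1), (n.choose i : ℝ) *
            ((∫ ω, (∑ j ∈ Finset.Ico k (k+s'), Y j ω)^i) *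
              ∫ ω, (S Y k ω + (r:ℝ))^(n-i) * (S Y t ω + (r:ℝ))^m) := by
          refine Finset.sum_congr rfl fun i _ => ?_
          rw [shift_int hMeas hIndep hId k s' i]
      _ = ∑ i ∈ Finset.range (n+1), (n.choose i : ℝ) *
            ∫ ω, (∑ j ∈ Finset.Ico k (k+s'), Y j ω)^i *
              ((S Y k ω + (r:ℝ))^(n-i) * (S Y t ω + (r:ℝ))^m) := by
          refine Finset.sum_congr rfl fun i _ => ?_
          rw [split_integral hMeas hIndep k s' t (n-i) m i (r:ℝ) (r:ℝ) htk]
      _ = ∑ i ∈ Finset.range (n+1), ∫ ω, (n.choose i : ℝ) *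
            ((∑ j ∈ Finset.Ico k (k+s'), Y j ω)^i *
              ((S Y k ω + (r:ℝ))^(n-i) * (S Y t ω + (r:ℝ))^m)) := by
          refine Finset.sum_congr rfl fun i _ => ?_
          rw [integral_const_mul]
      _ = ∫ ω, ∑ i ∈ Finset.range (n+1), (n.choose i : ℝ) *
            ((∑ j ∈ Finset.Ico k (k+s'), Y j ω)^i *
              ((S Y k ω + (r:ℝ))^(n-i) * (S Y t ω + (r:ℝ))^m)) :=
          (integral_finset_sum _ (fun i _ =>
            (YSpan_integrable hMeas hIndep hId hInt (hmem i)).const_mul _)).symm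
      _ = ∫ ω, (S Y (k+s') ω + (r:ℝ))^n * (S Y t ω + (r:ℝ))^m := by
          refine integral_congr_ae (Filter.EventuallyEq.of_eq (funext fun ω => ?_))
          have hAB : (∑ j ∈ Finset.Ico k (k+s'), Y j ω) + (S Y k ω + (r:ℝ))
              = S Y (k+s') ω + (r:ℝ) := by
            rw [← add_assoc, add_comm (∑ j ∈ Finset.Ico k (k+s'), Y j ω) (S Y k ω), hsplitS ω]
          rw [← hAB, add_pow (∑ j ∈ Finset.Ico k (k+s'), Y j ω) (S Y k ω + (r:ℝ)) n, Finset.sum_mul]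
          exact Finset.sum_congr rfl fun i _ => by ring
  have h6 : ∀ a k : ℕ, k ≤ a → m < k →
      (∑ t ∈ Finset.range (k+1), (k.choose t : ℝ) * (-1:ℝ)^(k-t) *
        ∫ ω, (S Y a ω + (r:ℝ))^n * (S Y t ω + (r:ℝ))^m) = 0 := by
    intro a k hka hmk
    have hc := cent hMeas hIndep hId hInt a k n m (r:ℝ) (r:ℝ) hka
    rw [show Finset.Icc k m = ∅ from Finset.Icc_eq_empty (by omega), Finset.sum_empty] at hc
    exact hc.symm
  have h7 : ∀ p k t : ℕ, t ≤ k → n < p →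
      (∑ s' ∈ Finset.range (p+1), (p.choose s' : ℝ) * (-1:ℝ)^(p-s') *
        ∫ ω, (S Y (k+s') ω + (r:ℝ))^n * (S Y t ω + (r:ℝ))^m) = 0 := by
    intro p k t htk hnp
    calc (∑ s' ∈ Finset.range (p+1), (p.choose s' : ℝ) * (-1:ℝ)^(p-s') *
          ∫ ω, (S Y (k+s') ω + (r:ℝ))^n * (S Y t ω + (r:ℝ))^m)
        = ∑ s' ∈ Finset.range (p+1), (p.choose s' : ℝ) * (-1:ℝ)^(p-s') *
            ∑ i ∈ Finset.range (n+1), (n.choose i : ℝ) *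
              ((∫ ω, (S Y s' ω)^i) *
                ∫ ω, (S Y k ω + (r:ℝ))^(n-i) * (S Y t ω + (r:ℝ))^m) := by
          refine Finset.sum_congr rfl fun s' _ => ?_
          rw [h5 k s' t htk]
      _ = ∑ s' ∈ Finset.range (p+1), ∑ i ∈ Finset.range (n+1),
            ((n.choose i : ℝ) * (∫ ω, (S Y k ω + (r:ℝ))^(n-i) * (S Y t ω + (r:ℝ))^m)) *
              ((p.choose s' : ℝ) * (-1:ℝ)^(p-s') * ∫ ω, (S Y s' ω)^i) := by
          refine Finset.sum_congr rfl fun s' _ => ?_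
          rw [Finset.mul_sum]
          exact Finset.sum_congr rfl fun i _ => by ring
      _ = ∑ i ∈ Finset.range (n+1),
            ((n.choose i : ℝ) * (∫ ω, (S Y k ω + (r:ℝ))^(n-i) * (S Y t ω + (r:ℝ))^m)) *
              (∑ s' ∈ Finset.range (p+1),
                (p.choose s' : ℝ) * (-1:ℝ)^(p-s') * ∫ ω, (S Y s' ω)^i) := by
          rw [Finset.sum_comm]
          exact Finset.sum_congr rfl fun i _ => by rw [Finset.mul_sum]
      _ = 0 := by
          refine Finset.sum_eq_zero fun i hi => ?_
          rw [Finset.mem_range] at hi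
          rw [h2 i p (by omega), mul_zero]
  -- pointwise identification of the two exponents
  have hGqq : ∀ q : ℕ, (∫ ω, (S Y q ω + (r:ℝ))^(m+n))
      = ∫ ω, (S Y q ω + (r:ℝ))^n * (S Y q ω + (r:ℝ))^m := by
    intro q
    refine integral_congr_ae (Filter.EventuallyEq.of_eq (funext fun ω => ?_))
    rw [← pow_add]
    congr 1
    omega
  -- expand each (i,k) term of the RHS
  have hbody : ∀ i ∈ Finset.range (n+1), ∀ k ∈ Finset.range (m+1),
      ((k.factorial : ℝ))⁻¹ * (n.choose i : ℝ) * fallFac x k * y ^ k *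
        phiBiv Y i (x - (k : ℝ)) y *
        (∑ j ∈ Finset.Icc k m, (m.choose j : ℝ) *
          ∑ l ∈ posTuples k j, (Nat.multinomial Finset.univ l : ℝ) *
            (∫ ω, (S Y k ω + (r : ℝ)) ^ (n - i) * ∏ i' : Fin k, (Y i' ω) ^ (l i')) *
            (r : ℝ) ^ (m - j))
      = ∑ t ∈ Finset.range (k+1), ∑ p ∈ Finset.range (n+1), ∑ s' ∈ Finset.range (p+1),
          (((k.factorial : ℝ))⁻¹ * ((p).factorial : ℝ)⁻¹ * fallFac x k * fallFac (x - (k:ℝ)) (p) * y^k * y^(p)) *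
            (((p).choose s' : ℝ) * (-1:ℝ)^((p)-s') * ((k.choose t : ℝ) * (-1:ℝ)^(k-t))) *
            ((n.choose i : ℝ) * ((∫ ω, (S Y s' ω)^i) *
              ∫ ω, (S Y k ω + (r:ℝ))^(n-i) * (S Y t ω + (r:ℝ))^m)) := by
    intro i hi k hk
    rw [h4 k i hi, h1 i k]
    simp only [probStirling]
    rw [Finset.mul_sum]
    refine Finset.sum_congr rfl fun t _ => ?_
    rw [Finset.mul_sum, Finset.sum_mul]
    refine Finset.sum_congr rfl fun p _ => ?_
    simp only [Finset.mul_sum, Finset.sum_mul]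
    refine Finset.sum_congr rfl fun s' _ => ?_
    ring
  -- reorganize the quintuple sum and merge the binomial sum over i
  have hS2 :
      (∑ i ∈ Finset.range (n + 1), ∑ k ∈ Finset.range (m + 1),
        ((k.factorial : ℝ))⁻¹ * (n.choose i : ℝ) * fallFac x k * y ^ k *
          phiBiv Y i (x - (k : ℝ)) y *
          ∑ j ∈ Finset.Icc k m, (m.choose j : ℝ) *
            ∑ l ∈ posTuples k j,
              (Nat.multinomial Finset.univ l : ℝ) *
                (∫ ω, (S Y k ω + (r : ℝ)) ^ (n - i) * ∏ i' : Fin k, (Y i' ω) ^ (l i')) *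
                (r : ℝ) ^ (m - j))
      = ∑ k ∈ Finset.range (m+1), ∑ p ∈ Finset.range (n+1), (((k.factorial : ℝ))⁻¹ * ((p).factorial : ℝ)⁻¹ * fallFac x k * fallFac (x - (k:ℝ)) (p) * y^k * y^(p)) *
        (∑ s' ∈ Finset.range ((p)+1), ((p).choose s' : ℝ) * (-1:ℝ)^((p)-s') *
          ∑ t ∈ Finset.range (k+1), (k.choose t : ℝ) * (-1:ℝ)^(k-t) *
            ∫ ω, (S Y (k+s') ω + (r:ℝ))^n * (S Y t ω + (r:ℝ))^m) := by
    calc (∑ i ∈ Finset.range (n + 1), ∑ k ∈ Finset.range (m + 1),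
        ((k.factorial : ℝ))⁻¹ * (n.choose i : ℝ) * fallFac x k * y ^ k *
          phiBiv Y i (x - (k : ℝ)) y *
          ∑ j ∈ Finset.Icc k m, (m.choose j : ℝ) *
            ∑ l ∈ posTuples k j,
              (Nat.multinomial Finset.univ l : ℝ) *
                (∫ ω, (S Y k ω + (r : ℝ)) ^ (n - i) * ∏ i' : Fin k, (Y i' ω) ^ (l i')) *
                (r : ℝ) ^ (m - j))
        = ∑ i ∈ Finset.range (n+1), ∑ k ∈ Finset.range (m+1),
            ∑ t ∈ Finset.range (k+1), ∑ p ∈ Finset.range (n+1), ∑ s' ∈ Finset.range (p+1),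
              (((k.factorial : ℝ))⁻¹ * ((p).factorial : ℝ)⁻¹ * fallFac x k * fallFac (x - (k:ℝ)) (p) * y^k * y^(p)) *
            (((p).choose s' : ℝ) * (-1:ℝ)^((p)-s') * ((k.choose t : ℝ) * (-1:ℝ)^(k-t))) *
            ((n.choose i : ℝ) * ((∫ ω, (S Y s' ω)^i) *
              ∫ ω, (S Y k ω + (r:ℝ))^(n-i) * (S Y t ω + (r:ℝ))^m)) :=
          Finset.sum_congr rfl fun i hi => Finset.sum_congr rfl fun k hk => hbody i hi k hk
      _ = ∑ k ∈ Finset.range (m+1), ∑ p ∈ Finset.range (n+1), ∑ s' ∈ Finset.range (p+1),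
            ∑ t ∈ Finset.range (k+1), ∑ i ∈ Finset.range (n+1),
              (((k.factorial : ℝ))⁻¹ * ((p).factorial : ℝ)⁻¹ * fallFac x k * fallFac (x - (k:ℝ)) (p) * y^k * y^(p)) *
            (((p).choose s' : ℝ) * (-1:ℝ)^((p)-s') * ((k.choose t : ℝ) * (-1:ℝ)^(k-t))) *
            ((n.choose i : ℝ) * ((∫ ω, (S Y s' ω)^i) *
              ∫ ω, (S Y k ω + (r:ℝ))^(n-i) * (S Y t ω + (r:ℝ))^m)) :=
          sum_reorder5 (Finset.range (n+1)) (Finset.range (m+1)) (Finset.range (n+1))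
            (fun p => Finset.range (p+1)) (fun k => Finset.range (k+1)) _
      _ = ∑ k ∈ Finset.range (m+1), ∑ p ∈ Finset.range (n+1), (((k.factorial : ℝ))⁻¹ * ((p).factorial : ℝ)⁻¹ * fallFac x k * fallFac (x - (k:ℝ)) (p) * y^k * y^(p)) *
        (∑ s' ∈ Finset.range ((p)+1), ((p).choose s' : ℝ) * (-1:ℝ)^((p)-s') *
          ∑ t ∈ Finset.range (k+1), (k.choose t : ℝ) * (-1:ℝ)^(k-t) *
            ∫ ω, (S Y (k+s') ω + (r:ℝ))^n * (S Y t ω + (r:ℝ))^m) := by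
          refine Finset.sum_congr rfl fun k _ => Finset.sum_congr rfl fun p _ => ?_
          have hstep : ∀ s' ∈ Finset.range (p+1), ∀ t ∈ Finset.range (k+1),
              (∑ i ∈ Finset.range (n+1), (((k.factorial : ℝ))⁻¹ * ((p).factorial : ℝ)⁻¹ * fallFac x k * fallFac (x - (k:ℝ)) (p) * y^k * y^(p)) *
            (((p).choose s' : ℝ) * (-1:ℝ)^((p)-s') * ((k.choose t : ℝ) * (-1:ℝ)^(k-t))) *
            ((n.choose i : ℝ) * ((∫ ω, (S Y s' ω)^i) *
              ∫ ω, (S Y k ω + (r:ℝ))^(n-i) * (S Y t ω + (r:ℝ))^m)))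
              = ((((k.factorial : ℝ))⁻¹ * ((p).factorial : ℝ)⁻¹ * fallFac x k * fallFac (x - (k:ℝ)) (p) * y^k * y^(p)) *
                  ((p.choose s' : ℝ) * (-1:ℝ)^(p-s') * ((k.choose t : ℝ) * (-1:ℝ)^(k-t)))) *
                ∫ ω, (S Y (k+s') ω + (r:ℝ))^n * (S Y t ω + (r:ℝ))^m := by
            intro s' _ t htmem
            rw [Finset.mem_range] at htmem
            rw [← Finset.mul_sum, h5 k s' t (by omega)]
          rw [Finset.sum_congr rfl (fun s' hs' =>
            Finset.sum_congr rfl (fun t ht => hstep s' hs' t ht))]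
          simp only [Finset.mul_sum]
          refine Finset.sum_congr rfl fun s' _ => ?_
          refine Finset.sum_congr rfl fun t _ => ?_
          ring
  -- vanishing of the (k,p) term when k > m
  have hzero1 : ∀ k p : ℕ, m < k → ((((k.factorial : ℝ))⁻¹ * ((p).factorial : ℝ)⁻¹ * fallFac x k * fallFac (x - (k:ℝ)) (p) * y^k * y^(p)) *
        (∑ s' ∈ Finset.range ((p)+1), ((p).choose s' : ℝ) * (-1:ℝ)^((p)-s') *
          ∑ t ∈ Finset.range (k+1), (k.choose t : ℝ) * (-1:ℝ)^(k-t) *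
            ∫ ω, (S Y (k+s') ω + (r:ℝ))^n * (S Y t ω + (r:ℝ))^m)) = 0 := by
    intro k p hmk
    have hz : ∀ s' ∈ Finset.range (p+1),
        (p.choose s' : ℝ) * (-1:ℝ)^(p-s') *
          ∑ t ∈ Finset.range (k+1), (k.choose t : ℝ) * (-1:ℝ)^(k-t) *
            ∫ ω, (S Y (k+s') ω + (r:ℝ))^n * (S Y t ω + (r:ℝ))^m = 0 := by
      intro s' _
      rw [h6 (k+s') k (Nat.le_add_right k s') hmk, mul_zero]
    rw [Finset.sum_eq_zero hz, mul_zero]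
  -- vanishing of the (k,p) term when p > n
  have hzero2 : ∀ k p : ℕ, n < p → ((((k.factorial : ℝ))⁻¹ * ((p).factorial : ℝ)⁻¹ * fallFac x k * fallFac (x - (k:ℝ)) (p) * y^k * y^(p)) *
        (∑ s' ∈ Finset.range ((p)+1), ((p).choose s' : ℝ) * (-1:ℝ)^((p)-s') *
          ∑ t ∈ Finset.range (k+1), (k.choose t : ℝ) * (-1:ℝ)^(k-t) *
            ∫ ω, (S Y (k+s') ω + (r:ℝ))^n * (S Y t ω + (r:ℝ))^m)) = 0 := by
    intro k p hnp
    have h8 : (∑ s' ∈ Finset.range ((p)+1), ((p).choose s' : ℝ) * (-1:ℝ)^((p)-s') *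
          ∑ t ∈ Finset.range (k+1), (k.choose t : ℝ) * (-1:ℝ)^(k-t) *
            ∫ ω, (S Y (k+s') ω + (r:ℝ))^n * (S Y t ω + (r:ℝ))^m)
        = ∑ t ∈ Finset.range (k+1), (k.choose t : ℝ) * (-1:ℝ)^(k-t) *
            ∑ s' ∈ Finset.range (p+1), (p.choose s' : ℝ) * (-1:ℝ)^(p-s') *
              ∫ ω, (S Y (k+s') ω + (r:ℝ))^n * (S Y t ω + (r:ℝ))^m := by
      calc (∑ s' ∈ Finset.range ((p)+1), ((p).choose s' : ℝ) * (-1:ℝ)^((p)-s') *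
          ∑ t ∈ Finset.range (k+1), (k.choose t : ℝ) * (-1:ℝ)^(k-t) *
            ∫ ω, (S Y (k+s') ω + (r:ℝ))^n * (S Y t ω + (r:ℝ))^m)
          = ∑ s' ∈ Finset.range (p+1), ∑ t ∈ Finset.range (k+1),
              (p.choose s' : ℝ) * (-1:ℝ)^(p-s') *
                ((k.choose t : ℝ) * (-1:ℝ)^(k-t) *
                  ∫ ω, (S Y (k+s') ω + (r:ℝ))^n * (S Y t ω + (r:ℝ))^m) :=
            Finset.sum_congr rfl fun s' _ => Finset.mul_sum _ _ _
        _ = ∑ t ∈ Finset.range (k+1), ∑ s' ∈ Finset.range (p+1),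
              (p.choose s' : ℝ) * (-1:ℝ)^(p-s') *
                ((k.choose t : ℝ) * (-1:ℝ)^(k-t) *
                  ∫ ω, (S Y (k+s') ω + (r:ℝ))^n * (S Y t ω + (r:ℝ))^m) := Finset.sum_comm
        _ = _ := by
            refine Finset.sum_congr rfl fun t _ => ?_
            rw [Finset.mul_sum]
            refine Finset.sum_congr rfl fun s' _ => ?_
            ring
    rw [h8]
    have hz : ∀ t ∈ Finset.range (k+1),
        (k.choose t : ℝ) * (-1:ℝ)^(k-t) *
          ∑ s' ∈ Finset.range (p+1), (p.choose s' : ℝ) * (-1:ℝ)^(p-s') *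
            ∫ ω, (S Y (k+s') ω + (r:ℝ))^n * (S Y t ω + (r:ℝ))^m = 0 := by
      intro t htmem
      rw [Finset.mem_range] at htmem
      rw [h7 p k t (by omega) hnp, mul_zero]
    rw [Finset.sum_eq_zero hz, mul_zero]
  -- per-K collapse
  have hfinK : ∀ K ∈ Finset.range (m+n+1),
      (∑ k ∈ Finset.range (K+1), (((k.factorial : ℝ))⁻¹ * ((K-k).factorial : ℝ)⁻¹ * fallFac x k * fallFac (x - (k:ℝ)) (K-k) * y^k * y^(K-k)) *
        (∑ s' ∈ Finset.range ((K-k)+1), ((K-k).choose s' : ℝ) * (-1:ℝ)^((K-k)-s') *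
          ∑ t ∈ Finset.range (k+1), (k.choose t : ℝ) * (-1:ℝ)^(k-t) *
            ∫ ω, (S Y (k+s') ω + (r:ℝ))^n * (S Y t ω + (r:ℝ))^m))
      = probRStirling Y r (m+n) K * fallFac x K * y^K := by
    intro K _
    have hcol := fin_collapse
      (fun a t' => ∫ ω, (S Y a ω + (r:ℝ))^n * (S Y t' ω + (r:ℝ))^m) K
    have hstep : ∀ k ∈ Finset.range (K+1), ((((k.factorial : ℝ))⁻¹ * ((K-k).factorial : ℝ)⁻¹ * fallFac x k * fallFac (x - (k:ℝ)) (K-k) * y^k * y^(K-k)) *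
        (∑ s' ∈ Finset.range ((K-k)+1), ((K-k).choose s' : ℝ) * (-1:ℝ)^((K-k)-s') *
          ∑ t ∈ Finset.range (k+1), (k.choose t : ℝ) * (-1:ℝ)^(k-t) *
            ∫ ω, (S Y (k+s') ω + (r:ℝ))^n * (S Y t ω + (r:ℝ))^m))
        = (((K.factorial : ℝ))⁻¹ * fallFac x K * y^K) *
          ((K.choose k : ℝ) *
            ∑ s ∈ Finset.range (K-k+1), ∑ t ∈ Finset.range (k+1),
              ((K-k).choose s : ℝ) * (k.choose t : ℝ) * ((-1:ℝ)^(K-k-s) * (-1:ℝ)^(k-t)) *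
                ∫ ω, (S Y (k+s) ω + (r:ℝ))^n * (S Y t ω + (r:ℝ))^m) := by
      intro k hkmem
      rw [Finset.mem_range] at hkmem
      have hkK : k ≤ K := by omega
      have e1 := inv_factorial_mul k K hkK
      have e2 : k + (K - k) = K := Nat.add_sub_cancel' hkK
      have e3 : fallFac x k * fallFac (x - (k:ℝ)) (K-k) = fallFac x K := by
        rw [← fallFac_add, e2]
      have e4 : y^k * y^(K-k) = y^K := by rw [← pow_add, e2]
      have e5 : (∑ s' ∈ Finset.range ((K-k)+1), ((K-k).choose s' : ℝ) * (-1:ℝ)^((K-k)-s') *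
          ∑ t ∈ Finset.range (k+1), (k.choose t : ℝ) * (-1:ℝ)^(k-t) *
            ∫ ω, (S Y (k+s') ω + (r:ℝ))^n * (S Y t ω + (r:ℝ))^m)
          = ∑ s ∈ Finset.range (K-k+1), ∑ t ∈ Finset.range (k+1),
              ((K-k).choose s : ℝ) * (k.choose t : ℝ) * ((-1:ℝ)^(K-k-s) * (-1:ℝ)^(k-t)) *
                ∫ ω, (S Y (k+s) ω + (r:ℝ))^n * (S Y t ω + (r:ℝ))^m := by
        refine Finset.sum_congr rfl fun s _ => ?_
        rw [Finset.mul_sum]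
        refine Finset.sum_congr rfl fun t _ => ?_
        ring
      have e6 : (((k.factorial : ℝ))⁻¹ * ((K-k).factorial : ℝ)⁻¹ * fallFac x k * fallFac (x - (k:ℝ)) (K-k) * y^k * y^(K-k))
          = ((K.factorial : ℝ))⁻¹ * fallFac x K * y^K * (K.choose k : ℝ) := by
        calc (((k.factorial : ℝ))⁻¹ * ((K-k).factorial : ℝ)⁻¹ * fallFac x k * fallFac (x - (k:ℝ)) (K-k) * y^k * y^(K-k))
            = (((k.factorial : ℝ))⁻¹ * (((K-k).factorial : ℝ))⁻¹) *
                ((fallFac x k * fallFac (x - (k:ℝ)) (K-k)) * (y^k * y^(K-k))) := by ring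
          _ = (((K.factorial : ℝ))⁻¹ * (K.choose k : ℝ)) * (fallFac x K * y^K) := by
              rw [e1, e3, e4]
          _ = _ := by ring
      rw [e5, e6]
      ring
    calc (∑ k ∈ Finset.range (K+1), (((k.factorial : ℝ))⁻¹ * ((K-k).factorial : ℝ)⁻¹ * fallFac x k * fallFac (x - (k:ℝ)) (K-k) * y^k * y^(K-k)) *
        (∑ s' ∈ Finset.range ((K-k)+1), ((K-k).choose s' : ℝ) * (-1:ℝ)^((K-k)-s') *
          ∑ t ∈ Finset.range (k+1), (k.choose t : ℝ) * (-1:ℝ)^(k-t) *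
            ∫ ω, (S Y (k+s') ω + (r:ℝ))^n * (S Y t ω + (r:ℝ))^m))
        = ∑ k ∈ Finset.range (K+1), (((K.factorial : ℝ))⁻¹ * fallFac x K * y^K) *
            ((K.choose k : ℝ) *
              ∑ s ∈ Finset.range (K-k+1), ∑ t ∈ Finset.range (k+1),
                ((K-k).choose s : ℝ) * (k.choose t : ℝ) * ((-1:ℝ)^(K-k-s) * (-1:ℝ)^(k-t)) *
                  ∫ ω, (S Y (k+s) ω + (r:ℝ))^n * (S Y t ω + (r:ℝ))^m) :=
          Finset.sum_congr rfl hstep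
      _ = (((K.factorial : ℝ))⁻¹ * fallFac x K * y^K) *
            ∑ k ∈ Finset.range (K+1), (K.choose k : ℝ) *
              ∑ s ∈ Finset.range (K-k+1), ∑ t ∈ Finset.range (k+1),
                ((K-k).choose s : ℝ) * (k.choose t : ℝ) * ((-1:ℝ)^(K-k-s) * (-1:ℝ)^(k-t)) *
                  ∫ ω, (S Y (k+s) ω + (r:ℝ))^n * (S Y t ω + (r:ℝ))^m :=
          (Finset.mul_sum _ _ _).symm
      _ = (((K.factorial : ℝ))⁻¹ * fallFac x K * y^K) *
            ∑ q ∈ Finset.range (K+1), (K.choose q : ℝ) * (-1:ℝ)^(K-q) *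
              ∫ ω, (S Y q ω + (r:ℝ))^n * (S Y q ω + (r:ℝ))^m := by rw [hcol]
      _ = probRStirling Y r (m+n) K * fallFac x K * y^K := by
          simp only [probRStirling]
          have hq : (∑ q ∈ Finset.range (K+1), (K.choose q : ℝ) * (-1:ℝ)^(K-q) *
              ∫ ω, (S Y q ω + (r:ℝ))^(m+n))
              = ∑ q ∈ Finset.range (K+1), (K.choose q : ℝ) * (-1:ℝ)^(K-q) *
                ∫ ω, (S Y q ω + (r:ℝ))^n * (S Y q ω + (r:ℝ))^m :=
            Finset.sum_congr rfl fun q _ => by rw [hGqq q]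
          rw [hq]
          ring
  -- vanishing beyond the triangle
  have hzero_tri : ∀ k p : ℕ, m + n < k + p → ((((k.factorial : ℝ))⁻¹ * ((p).factorial : ℝ)⁻¹ * fallFac x k * fallFac (x - (k:ℝ)) (p) * y^k * y^(p)) *
        (∑ s' ∈ Finset.range ((p)+1), ((p).choose s' : ℝ) * (-1:ℝ)^((p)-s') *
          ∑ t ∈ Finset.range (k+1), (k.choose t : ℝ) * (-1:ℝ)^(k-t) *
            ∫ ω, (S Y (k+s') ω + (r:ℝ))^n * (S Y t ω + (r:ℝ))^m)) = 0 := by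
    intro k p h
    rcases Nat.lt_or_ge m k with hk | hk
    · exact hzero1 k p hk
    · exact hzero2 k p (by omega)
  have hext1 : ∀ k ∈ Finset.range (m+1),
      (∑ p ∈ Finset.range (n+1), (((k.factorial : ℝ))⁻¹ * ((p).factorial : ℝ)⁻¹ * fallFac x k * fallFac (x - (k:ℝ)) (p) * y^k * y^(p)) *
        (∑ s' ∈ Finset.range ((p)+1), ((p).choose s' : ℝ) * (-1:ℝ)^((p)-s') *
          ∑ t ∈ Finset.range (k+1), (k.choose t : ℝ) * (-1:ℝ)^(k-t) *
            ∫ ω, (S Y (k+s') ω + (r:ℝ))^n * (S Y t ω + (r:ℝ))^m))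
      = ∑ p ∈ Finset.range (m+n+1), (((k.factorial : ℝ))⁻¹ * ((p).factorial : ℝ)⁻¹ * fallFac x k * fallFac (x - (k:ℝ)) (p) * y^k * y^(p)) *
        (∑ s' ∈ Finset.range ((p)+1), ((p).choose s' : ℝ) * (-1:ℝ)^((p)-s') *
          ∑ t ∈ Finset.range (k+1), (k.choose t : ℝ) * (-1:ℝ)^(k-t) *
            ∫ ω, (S Y (k+s') ω + (r:ℝ))^n * (S Y t ω + (r:ℝ))^m) := by
    intro k _
    refine Finset.sum_subset (Finset.range_subset_range.mpr (by omega)) ?_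
    intro p _ hp
    rw [Finset.mem_range] at hp
    exact hzero2 k p (by omega)
  have hext2 : (∑ k ∈ Finset.range (m+1), ∑ p ∈ Finset.range (m+n+1), (((k.factorial : ℝ))⁻¹ * ((p).factorial : ℝ)⁻¹ * fallFac x k * fallFac (x - (k:ℝ)) (p) * y^k * y^(p)) *
        (∑ s' ∈ Finset.range ((p)+1), ((p).choose s' : ℝ) * (-1:ℝ)^((p)-s') *
          ∑ t ∈ Finset.range (k+1), (k.choose t : ℝ) * (-1:ℝ)^(k-t) *
            ∫ ω, (S Y (k+s') ω + (r:ℝ))^n * (S Y t ω + (r:ℝ))^m))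
      = ∑ k ∈ Finset.range (m+n+1), ∑ p ∈ Finset.range (m+n+1), (((k.factorial : ℝ))⁻¹ * ((p).factorial : ℝ)⁻¹ * fallFac x k * fallFac (x - (k:ℝ)) (p) * y^k * y^(p)) *
        (∑ s' ∈ Finset.range ((p)+1), ((p).choose s' : ℝ) * (-1:ℝ)^((p)-s') *
          ∑ t ∈ Finset.range (k+1), (k.choose t : ℝ) * (-1:ℝ)^(k-t) *
            ∫ ω, (S Y (k+s') ω + (r:ℝ))^n * (S Y t ω + (r:ℝ))^m) := by
    refine Finset.sum_subset (Finset.range_subset_range.mpr (by omega)) ?_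
    intro k _ hk
    rw [Finset.mem_range] at hk
    exact Finset.sum_eq_zero fun p _ => hzero1 k p (by omega)
  calc phiRBiv Y r (m+n) x y
      = ∑ K ∈ Finset.range (m+n+1), probRStirling Y r (m+n) K * fallFac x K * y^K := rfl
    _ = ∑ K ∈ Finset.range (m+n+1), ∑ k ∈ Finset.range (K+1), (((k.factorial : ℝ))⁻¹ * ((K-k).factorial : ℝ)⁻¹ * fallFac x k * fallFac (x - (k:ℝ)) (K-k) * y^k * y^(K-k)) *
        (∑ s' ∈ Finset.range ((K-k)+1), ((K-k).choose s' : ℝ) * (-1:ℝ)^((K-k)-s') *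
          ∑ t ∈ Finset.range (k+1), (k.choose t : ℝ) * (-1:ℝ)^(k-t) *
            ∫ ω, (S Y (k+s') ω + (r:ℝ))^n * (S Y t ω + (r:ℝ))^m) :=
        (Finset.sum_congr rfl hfinK).symm
    _ = ∑ k ∈ Finset.range (m+n+1), ∑ p ∈ Finset.range (m+n+1), (((k.factorial : ℝ))⁻¹ * ((p).factorial : ℝ)⁻¹ * fallFac x k * fallFac (x - (k:ℝ)) (p) * y^k * y^(p)) *
        (∑ s' ∈ Finset.range ((p)+1), ((p).choose s' : ℝ) * (-1:ℝ)^((p)-s') *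
          ∑ t ∈ Finset.range (k+1), (k.choose t : ℝ) * (-1:ℝ)^(k-t) *
            ∫ ω, (S Y (k+s') ω + (r:ℝ))^n * (S Y t ω + (r:ℝ))^m) :=
        (triangle_sum (m+n) (fun k p => (((k.factorial : ℝ))⁻¹ * ((p).factorial : ℝ)⁻¹ * fallFac x k * fallFac (x - (k:ℝ)) (p) * y^k * y^(p)) *
        (∑ s' ∈ Finset.range ((p)+1), ((p).choose s' : ℝ) * (-1:ℝ)^((p)-s') *
          ∑ t ∈ Finset.range (k+1), (k.choose t : ℝ) * (-1:ℝ)^(k-t) *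
            ∫ ω, (S Y (k+s') ω + (r:ℝ))^n * (S Y t ω + (r:ℝ))^m)) hzero_tri).symm
    _ = ∑ k ∈ Finset.range (m+1), ∑ p ∈ Finset.range (m+n+1), (((k.factorial : ℝ))⁻¹ * ((p).factorial : ℝ)⁻¹ * fallFac x k * fallFac (x - (k:ℝ)) (p) * y^k * y^(p)) *
        (∑ s' ∈ Finset.range ((p)+1), ((p).choose s' : ℝ) * (-1:ℝ)^((p)-s') *
          ∑ t ∈ Finset.range (k+1), (k.choose t : ℝ) * (-1:ℝ)^(k-t) *
            ∫ ω, (S Y (k+s') ω + (r:ℝ))^n * (S Y t ω + (r:ℝ))^m) := hext2.symm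
    _ = ∑ k ∈ Finset.range (m+1), ∑ p ∈ Finset.range (n+1), (((k.factorial : ℝ))⁻¹ * ((p).factorial : ℝ)⁻¹ * fallFac x k * fallFac (x - (k:ℝ)) (p) * y^k * y^(p)) *
        (∑ s' ∈ Finset.range ((p)+1), ((p).choose s' : ℝ) * (-1:ℝ)^((p)-s') *
          ∑ t ∈ Finset.range (k+1), (k.choose t : ℝ) * (-1:ℝ)^(k-t) *
            ∫ ω, (S Y (k+s') ω + (r:ℝ))^n * (S Y t ω + (r:ℝ))^m) :=
        (Finset.sum_congr rfl hext1).symm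
    _ = ∑ i ∈ Finset.range (n + 1), ∑ k ∈ Finset.range (m + 1),
        ((k.factorial : ℝ))⁻¹ * (n.choose i : ℝ) * fallFac x k * y ^ k *
          phiBiv Y i (x - (k : ℝ)) y *
          ∑ j ∈ Finset.Icc k m, (m.choose j : ℝ) *
            ∑ l ∈ posTuples k j,
              (Nat.multinomial Finset.univ l : ℝ) *
                (∫ ω, (S Y k ω + (r : ℝ)) ^ (n - i) * ∏ i' : Fin k, (Y i' ω) ^ (l i')) *
                (r : ℝ) ^ (m - j) := hS2.symm

end
end

section
/- For every nonnegative integer k, the following identity of formal power series over ℝ holds: (1/k!) · (G − 1)^k = Σ_{n≥0} {n brace k}_Y · t^n / n!, where G = Σ_{n≥0} E[Y^n] t^n / n! is the formal moment series of Y. Equivalently, for all n ≥ 0, the coefficient of t^n in (1/k!)·(G − 1)^k multiplied by n! equals {n brace k}_Y (which vanishes for n < k). -/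
open MeasureTheory ProbabilityTheory Finset

noncomputable section

variable {Ω : Type*} [MeasureSpace Ω]

/-- The formal moment series `G = ∑_{n≥0} E[Y₀^n] t^n / n!` of `Y₀`. -/
def momentSeries (Y₀ : Ω → ℝ) : PowerSeries ℝ :=
  PowerSeries.mk fun n => (∫ ω, (Y₀ ω) ^ n) / (n.factorial : ℝ)

section Aux

variable [IsProbabilityMeasure (volume : Measure Ω)]
  (Y : ℕ → Ω → ℝ) (Y₀ : Ω → ℝ)

lemma hIdPow (hId : ∀ i, IdentDistrib (Y i) Y₀ volume volume) (i q : ℕ) :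
    IdentDistrib (fun ω => (Y i ω) ^ q) (fun ω => (Y₀ ω) ^ q) volume volume :=
  (hId i).comp (measurable_id.pow_const q)

lemma intYpow (hId : ∀ i, IdentDistrib (Y i) Y₀ volume volume)
    (hInt : ∀ m : ℕ, Integrable fun ω => (Y₀ ω) ^ m) (i q : ℕ) :
    Integrable (fun ω => (Y i ω) ^ q) := by
  rw [(hIdPow Y Y₀ hId i q).integrable_iff]; exact hInt q

/-- Independence of `S_i` and `Y_i`. -/
lemma indepS (hMeas : ∀ i, Measurable (Y i))
    (hIndep : iIndepFun Y volume) (i : ℕ) :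
    IndepFun (S Y i) (Y i) volume := by
  have h := hIndep.indepFun_sum_range_succ hMeas i
  have : S Y i = ∑ j ∈ Finset.range i, Y j := by
    ext ω; simp [S]
  rw [this]; exact h

/-- The key lemma: moments and moment series of `S_i`. -/
lemma momentS (hMeas : ∀ i, Measurable (Y i))
    (hIndep : iIndepFun Y volume)
    (hId : ∀ i, IdentDistrib (Y i) Y₀ volume volume)
    (hInt : ∀ m : ℕ, Integrable fun ω => (Y₀ ω) ^ m) (i : ℕ) :
    (∀ n, Integrable (fun ω => (S Y i ω) ^ n)) ∧
      (PowerSeries.mk fun n => (∫ ω, (S Y i ω) ^ n) / (n.factorial : ℝ)) =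
        (momentSeries Y₀) ^ i := by
  induction i with
  | zero =>
    constructor
    · intro n
      have : (fun ω : Ω => (S Y 0 ω) ^ n) = fun _ => (0 : ℝ) ^ n := by
        ext ω; simp [S]
      rw [this]; exact integrable_const _
    · ext n
      rw [pow_zero, PowerSeries.coeff_mk, PowerSeries.coeff_one]
      have : (fun ω : Ω => (S Y 0 ω) ^ n) = fun _ => (0 : ℝ) ^ n := by
        ext ω; simp [S]
      rw [this, integral_const]
      rcases n with _ | n <;> simp
  | succ i ih =>
    obtain ⟨ihInt, ihEq⟩ := ih
    -- Independence and measurability of powers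
    have hindep : IndepFun (S Y i) (Y i) volume := indepS Y hMeas hIndep i
    have hmeasS : Measurable (S Y i) := by
      apply Finset.measurable_sum
      intro j _; exact hMeas j
    have hindepPow : ∀ p q : ℕ,
        IndepFun (fun ω => (S Y i ω) ^ p) (fun ω => (Y i ω) ^ q) volume := fun p q =>
      hindep.comp (measurable_id.pow_const p) (measurable_id.pow_const q)
    have hintY : ∀ q, Integrable (fun ω => (Y i ω) ^ q) := intYpow Y Y₀ hId hInt i
    have hSsucc : ∀ ω, S Y (i + 1) ω = S Y i ω + Y i ω := by
      intro ω; simp [S, Finset.sum_range_succ]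
    have hexpand : ∀ n ω, (S Y (i + 1) ω) ^ n =
        ∑ m ∈ Finset.range (n + 1),
          (S Y i ω) ^ m * (Y i ω) ^ (n - m) * (n.choose m : ℝ) := by
      intro n ω
      rw [hSsucc ω, add_pow]
    have hintTerm : ∀ p q : ℕ,
        Integrable (fun ω => (S Y i ω) ^ p * (Y i ω) ^ q) := fun p q =>
      (hindepPow p q).integrable_mul (ihInt p) (hintY q)
    have hintS : ∀ n, Integrable (fun ω => (S Y (i + 1) ω) ^ n) := by
      intro n
      have : (fun ω => (S Y (i + 1) ω) ^ n) =
          fun ω => ∑ m ∈ Finset.range (n + 1),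
            (S Y i ω) ^ m * (Y i ω) ^ (n - m) * (n.choose m : ℝ) := by
        ext ω; exact hexpand n ω
      rw [this]
      apply integrable_finset_sum
      intro m _
      exact ((hintTerm m (n - m)).mul_const _)
    refine ⟨hintS, ?_⟩
    have hmom : ∀ n, (∫ ω, (S Y (i + 1) ω) ^ n) =
        ∑ m ∈ Finset.range (n + 1),
          (n.choose m : ℝ) * (∫ ω, (S Y i ω) ^ m) * (∫ ω, (Y₀ ω) ^ (n - m)) := by
      intro n
      calc (∫ ω, (S Y (i + 1) ω) ^ n)
          = ∫ ω, ∑ m ∈ Finset.range (n + 1),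
              (S Y i ω) ^ m * (Y i ω) ^ (n - m) * (n.choose m : ℝ) := by
            congr 1; ext ω; exact hexpand n ω
        _ = ∑ m ∈ Finset.range (n + 1),
              ∫ ω, (S Y i ω) ^ m * (Y i ω) ^ (n - m) * (n.choose m : ℝ) := by
            apply integral_finset_sum
            intro m _
            exact ((hintTerm m (n - m)).mul_const _)
        _ = ∑ m ∈ Finset.range (n + 1),
              (n.choose m : ℝ) * (∫ ω, (S Y i ω) ^ m) * (∫ ω, (Y₀ ω) ^ (n - m)) := by
            apply Finset.sum_congr rfl
            intro m _
            rw [integral_mul_const]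
            have hmul : (∫ ω, (S Y i ω) ^ m * (Y i ω) ^ (n - m)) =
                (∫ ω, (S Y i ω) ^ m) * (∫ ω, (Y i ω) ^ (n - m)) :=
              (hindepPow m (n - m)).integral_fun_mul_eq_mul_integral (ihInt m).aestronglyMeasurable
                (hintY (n - m)).aestronglyMeasurable
            rw [hmul, (hIdPow Y Y₀ hId i (n - m)).integral_eq]
            ring
    ext n
    rw [PowerSeries.coeff_mk, pow_succ, PowerSeries.coeff_mul, ← ihEq]
    rw [hmom n, Finset.sum_div, Finset.Nat.sum_antidiagonal_eq_sum_range_succ_mk]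
    apply Finset.sum_congr rfl
    intro m hm
    rw [PowerSeries.coeff_mk]
    simp only [momentSeries, PowerSeries.coeff_mk]
    have hmn : m ≤ n := Nat.lt_succ_iff.mp (Finset.mem_range.mp hm)
    rw [div_mul_div_comm]
    rw [div_eq_div_iff]
    · push_cast [Nat.choose_eq_factorial_div_factorial hmn]
      rw [Nat.cast_div (Nat.factorial_mul_factorial_dvd_factorial hmn)
        (by positivity)]
      field_simp
      push_cast
      ring
    · positivity
    · positivity

end Aux

theorem probStirling_generatingFunction
    [IsProbabilityMeasure (volume : Measure Ω)]
    (Y : ℕ → Ω → ℝ) (Y₀ : Ω → ℝ)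
    (hMeas : ∀ i, Measurable (Y i))
    (hIndep : iIndepFun Y volume)
    (hId : ∀ i, IdentDistrib (Y i) Y₀ volume volume)
    (hInt : ∀ m : ℕ, Integrable fun ω => (Y₀ ω) ^ m)
    (k : ℕ) :
    ((k.factorial : ℝ))⁻¹ • (momentSeries Y₀ - 1) ^ k =
      PowerSeries.mk fun n => probStirling Y n k / (n.factorial : ℝ) := by
  have key : ∀ i : ℕ,
      (PowerSeries.mk fun n => (∫ ω, (S Y i ω) ^ n) / (n.factorial : ℝ)) =
        (momentSeries Y₀) ^ i := fun i =>
    (momentS Y Y₀ hMeas hIndep hId hInt i).2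
  ext n
  rw [PowerSeries.coeff_smul, PowerSeries.coeff_mk, sub_pow, map_sum]
  rw [probStirling, smul_eq_mul, div_eq_mul_inv (_ * _), mul_assoc,
    mul_comm _ ((n.factorial : ℝ))⁻¹]
  congr 1
  rw [Finset.mul_sum]
  apply Finset.sum_congr rfl
  intro i hi
  have hik : i ≤ k := Nat.lt_succ_iff.mp (Finset.mem_range.mp hi)
  have hsign : ((-1 : PowerSeries ℝ) ^ (i + k)) = ((-1 : ℝ) ^ (k - i)) • (1 : PowerSeries ℝ) := by
    have h2 : i + k = (k - i) + 2 * i := by omega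
    have : (-1 : ℝ) ^ (i + k) = (-1 : ℝ) ^ (k - i) := by
      rw [h2, pow_add, pow_mul]; simp
    rw [← this, PowerSeries.smul_eq_C_mul, mul_one, map_pow, map_neg, map_one]
  have hC : ((k.choose i : ℕ) : PowerSeries ℝ) =
      PowerSeries.C ((k.choose i : ℕ) : ℝ) := by simp
  rw [one_pow, mul_one, ← key i, hsign, smul_mul_assoc, one_mul, hC,
    PowerSeries.coeff_mul_C, PowerSeries.coeff_smul, PowerSeries.coeff_mk, smul_eq_mul]
  field_simp
end
end

section
/- Fix a positive integer r. For every nonnegative integer k, the following identity of formal power series over ℝ holds: (1/k!) · (G − 1)^k · exp(rt) = Σ_{n≥0} {n+r brace k+r}_{r,Y} · t^n / n!, where G = Σ_{n≥0} E[Y^n] t^n / n! is the formal moment series of Y and exp(rt) = Σ_{n≥0} r^n t^n / n!. Equivalently, for all n ≥ 0, n! times the coefficient of t^n in (1/k!)·(G − 1)^k·exp(rt) equals {n+r brace k+r}_{r,Y} (which vanishes for n < k). -/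
open MeasureTheory ProbabilityTheory Finset

noncomputable section

variable {Ω : Type*} [MeasureSpace Ω]

/-- The formal exponential series `exp(rt) = ∑_{n≥0} r^n t^n / n!`. -/
def expSeries (r : ℕ) : PowerSeries ℝ :=
  PowerSeries.mk fun n => (r : ℝ) ^ n / (n.factorial : ℝ)

lemma choose_div_factorial (n a : ℕ) (ha : a ≤ n) :
    (n.choose a : ℝ) / (n.factorial : ℝ) =
      1 / ((a.factorial : ℝ) * ((n - a).factorial : ℝ)) := by
  have h := Nat.choose_mul_factorial_mul_factorial ha
  have h' : ((n.choose a : ℕ) : ℝ) * (a.factorial : ℝ) * ((n - a).factorial : ℝ)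
      = (n.factorial : ℝ) := by exact_mod_cast congrArg (Nat.cast (R := ℝ)) h
  have h1 : (a.factorial : ℝ) ≠ 0 := Nat.cast_ne_zero.mpr (Nat.factorial_ne_zero a)
  have h2 : ((n - a).factorial : ℝ) ≠ 0 := Nat.cast_ne_zero.mpr (Nat.factorial_ne_zero _)
  have h3 : (n.factorial : ℝ) ≠ 0 := Nat.cast_ne_zero.mpr (Nat.factorial_ne_zero n)
  field_simp
  linarith [h']

theorem probRStirling_generatingFunction
    [IsProbabilityMeasure (volume : Measure Ω)]
    (Y : ℕ → Ω → ℝ) (Y₀ : Ω → ℝ)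
    (hMeas : ∀ i, Measurable (Y i))
    (hIndep : iIndepFun Y volume)
    (hId : ∀ i, IdentDistrib (Y i) Y₀ volume volume)
    (hInt : ∀ m : ℕ, Integrable fun ω => (Y₀ ω) ^ m)
    (r : ℕ) (hr : 0 < r) (k : ℕ) :
    ((k.factorial : ℝ))⁻¹ • ((momentSeries Y₀ - 1) ^ k * expSeries r) =
      PowerSeries.mk fun n => probRStirling Y r n k / (n.factorial : ℝ) := by
  -- identically distributed powers
  have hIdPow : ∀ i b, IdentDistrib (fun ω => (Y i ω) ^ b) (fun ω => (Y₀ ω) ^ b)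
      volume volume := fun i b => (hId i).comp (measurable_id.pow_const b)
  have hIntY : ∀ i b, Integrable (fun ω => (Y i ω) ^ b) :=
    fun i b => ((hIdPow i b).integrable_iff).mpr (hInt b)
  have hIntEqY : ∀ i b, (∫ ω, (Y i ω) ^ b) = ∫ ω, (Y₀ ω) ^ b :=
    fun i b => (hIdPow i b).integral_eq
  have hMeasS : ∀ j, Measurable (S Y j) := by
    intro j
    exact Finset.measurable_sum _ fun i _ => hMeas i
  -- independence of S_j and Y_j
  have hIndepS : ∀ j, IndepFun (S Y j) (Y j) volume := by
    intro j
    have h := hIndep.indepFun_finsetSum_of_notMem hMeas (s := Finset.range j) (i := j) (by simp)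
    have : (∑ i ∈ Finset.range j, Y i) = S Y j := by
      funext ω; simp [S]
    rwa [this] at h
  -- key induction: integrability and moment series of S_j
  have key : ∀ j : ℕ, (∀ m : ℕ, Integrable (fun ω => (S Y j ω) ^ m)) ∧
      ((momentSeries Y₀) ^ j =
        PowerSeries.mk fun m => (∫ ω, (S Y j ω) ^ m) / (m.factorial : ℝ)) := by
    intro j
    induction j with
    | zero =>
      constructor
      · intro m
        have : (fun ω => (S Y 0 ω) ^ m) = fun _ => (0 : ℝ) ^ m := by
          funext ω; simp [S]
        rw [this]; exact integrable_const _
      · rw [pow_zero]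
        ext m
        have : (fun ω => (S Y 0 ω) ^ m) = fun _ => (0 : ℝ) ^ m := by
          funext ω; simp [S]
        simp only [PowerSeries.coeff_mk, this, integral_const, measure_univ,
          ENNReal.toReal_one, smul_eq_mul, one_mul, PowerSeries.coeff_one]
        rcases m with _ | m
        · simp
        · simp [Nat.succ_ne_zero, zero_pow]
    | succ j ih =>
      obtain ⟨ihInt, ihSer⟩ := ih
      -- independence of powers
      have hIndepPow : ∀ a b : ℕ,
          IndepFun (fun ω => (S Y j ω) ^ a) (fun ω => (Y j ω) ^ b) volume :=
        fun a b => (hIndepS j).comp (measurable_id.pow_const a) (measurable_id.pow_const b)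
      have hIntMul : ∀ a b : ℕ, Integrable (fun ω => (S Y j ω) ^ a * (Y j ω) ^ b) :=
        fun a b => (hIndepPow a b).integrable_mul (ihInt a) (hIntY j b)
      have hIntegralMul : ∀ a b : ℕ,
          (∫ ω, (S Y j ω) ^ a * (Y j ω) ^ b)
            = (∫ ω, (S Y j ω) ^ a) * ∫ ω, (Y₀ ω) ^ b := by
        intro a b
        rw [← hIntEqY j b]
        exact (hIndepPow a b).integral_mul_eq_mul_integral (ihInt a).1 (hIntY j b).1
      have hSsucc : ∀ ω, S Y (j + 1) ω = S Y j ω + Y j ω := by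
        intro ω; simp [S, Finset.sum_range_succ]
      have hExpand : ∀ m : ℕ, (fun ω => (S Y (j + 1) ω) ^ m)
          = fun ω => ∑ a ∈ Finset.range (m + 1),
              (S Y j ω) ^ a * (Y j ω) ^ (m - a) * (m.choose a : ℝ) := by
        intro m; funext ω; rw [hSsucc ω, add_pow]
      constructor
      · intro m
        rw [hExpand m]
        exact integrable_finset_sum _ fun a _ => (hIntMul a (m - a)).mul_const _
      · rw [pow_succ, ihSer]
        ext m
        rw [PowerSeries.coeff_mul]
        have hRHS : (∫ ω, (S Y (j + 1) ω) ^ m)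
            = ∑ a ∈ Finset.range (m + 1),
                (∫ ω, (S Y j ω) ^ a) * (∫ ω, (Y₀ ω) ^ (m - a)) * (m.choose a : ℝ) := by
          rw [show (fun ω => (S Y (j + 1) ω) ^ m) = _ from hExpand m]
          rw [integral_finset_sum _ fun a _ => (hIntMul a (m - a)).mul_const _]
          refine Finset.sum_congr rfl fun a _ => ?_
          rw [integral_mul_const, hIntegralMul a (m - a)]
        simp only [PowerSeries.coeff_mk, momentSeries, hRHS, Finset.sum_div]
        rw [Finset.Nat.sum_antidiagonal_eq_sum_range_succ_mk]
        refine Finset.sum_congr rfl fun a ha => ?_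
        have ha' : a ≤ m := Nat.lt_succ_iff.mp (Finset.mem_range.mp ha)
        have hc := choose_div_factorial m a ha'
        rw [mul_div_assoc, hc]
        ring
  -- coefficient of G^j * expSeries r
  have hcoeff : ∀ j n : ℕ,
      (PowerSeries.coeff n) ((momentSeries Y₀) ^ j * expSeries r)
        = (∫ ω, (S Y j ω + (r : ℝ)) ^ n) / (n.factorial : ℝ) := by
    intro j n
    obtain ⟨hIntS, hSer⟩ := key j
    have hIntTerm : ∀ a : ℕ, Integrable (fun ω => (S Y j ω) ^ a * (r : ℝ) ^ (n - a)
        * (n.choose a : ℝ)) := fun a => ((hIntS a).mul_const _).mul_const _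
    have hRHS : (∫ ω, (S Y j ω + (r : ℝ)) ^ n)
        = ∑ a ∈ Finset.range (n + 1),
            (∫ ω, (S Y j ω) ^ a) * (r : ℝ) ^ (n - a) * (n.choose a : ℝ) := by
      have : (fun ω => (S Y j ω + (r : ℝ)) ^ n)
          = fun ω => ∑ a ∈ Finset.range (n + 1),
              (S Y j ω) ^ a * (r : ℝ) ^ (n - a) * (n.choose a : ℝ) := by
        funext ω; rw [add_pow]
      rw [this, integral_finset_sum _ fun a _ => hIntTerm a]
      refine Finset.sum_congr rfl fun a _ => ?_
      rw [integral_mul_const, integral_mul_const]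
    rw [hSer, PowerSeries.coeff_mul, Finset.Nat.sum_antidiagonal_eq_sum_range_succ_mk,
      hRHS, Finset.sum_div]
    refine Finset.sum_congr rfl fun a ha => ?_
    have ha' : a ≤ n := Nat.lt_succ_iff.mp (Finset.mem_range.mp ha)
    simp only [PowerSeries.coeff_mk, expSeries]
    have hc := choose_div_factorial n a ha'
    rw [mul_div_assoc, hc]
    ring
  -- main computation
  ext n
  rw [PowerSeries.coeff_smul, sub_pow, Finset.sum_mul, map_sum, PowerSeries.coeff_mk,
    probRStirling, smul_eq_mul, div_eq_mul_inv, mul_assoc, Finset.sum_mul]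
  refine congrArg _ (Finset.sum_congr rfl fun j hj => ?_)
  have hj' : j ≤ k := Nat.lt_succ_iff.mp (Finset.mem_range.mp hj)
  have hsign : ((-1 : ℝ)) ^ (j + k) = (-1) ^ (k - j) := by
    have h : j + k = (k - j) + 2 * j := by omega
    rw [h, pow_add, pow_mul, neg_one_sq, one_pow, mul_one]
  have h1 : ((-1 : PowerSeries ℝ) ^ (j + k) * momentSeries Y₀ ^ j * (1 : PowerSeries ℝ) ^ (k - j)
      * ((k.choose j : ℕ) : PowerSeries ℝ) * expSeries r)
      = PowerSeries.C ((-1 : ℝ) ^ (j + k) * (k.choose j : ℝ)) *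
        (momentSeries Y₀ ^ j * expSeries r) := by
    simp only [map_mul, map_pow, map_neg, map_one, map_natCast, one_pow, mul_one]
    ring
  rw [h1, PowerSeries.coeff_C_mul, hcoeff j n, hsign]
  ring
end
end
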